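/- arXiv:2207.03226 — 4 statements merged into one kernel-verified Lean document; each statement's English description precedes it below -/
import Mathlib

section
/- Let D ∈ ℕ, D ≥ 1, let X and Y be nonempty finite sets, let (P_x)_{x∈X} and (Q_y)_{y∈Y} be PVMs on ℂ^D with P_x ≠ 0 and Q_y ≠ 0 for all x ∈ X and y ∈ Y, and let (p_x)_{x∈X} and (q_y)_{y∈Y} be probability vectors. For λ, μ ∈ (0,1] define the POVMs P^λ_x := λ P_x + (1−λ) p_x I and Q^μ_y := μ Q_y + (1−μ) q_y I. Then a POVM (G_{x,y})_{(x,y)∈X×Y} on ℂ^D can be generated through broadcasting from P^λ and Q^μ if and only if, for all x ∈ X and y ∈ Y, the operator G_{x,y} − (1−μ) q_y G^{(1)}_x − (1−λ) p_x G^{(2)}_y + (1−λ)(1−μ) p_x q_y I is positive semidefinite, where G^{(1)}_x := Σ_{y'∈Y} G_{x,y'} and G^{(2)}_y := Σ_{x'∈X} G_{x',y} are the margins of G. -/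
open Kronecker Matrix
open scoped ComplexOrder

noncomputable section

/-- A linear map between matrix algebras is completely positive if it maps positive
semidefinite block matrices (with any finite number of blocks) to positive semidefinite
block matrices, blockwise. -/
def IsCPMap {m n : Type} [Fintype m] [DecidableEq m] [Fintype n] [DecidableEq n]
    (Φ : Matrix m m ℂ →ₗ[ℂ] Matrix n n ℂ) : Prop :=
  ∀ (k : ℕ) (A : Matrix (Fin k × m) (Fin k × m) ℂ), A.PosSemidef →
    (Matrix.of fun (p q : Fin k × n) =>
      Φ (Matrix.of fun a b => A (p.1, a) (q.1, b)) p.2 q.2).PosSemidef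

/-- A quantum channel: a trace-preserving completely positive linear map. -/
def IsChannel {m n : Type} [Fintype m] [DecidableEq m] [Fintype n] [DecidableEq n]
    (Φ : Matrix m m ℂ →ₗ[ℂ] Matrix n n ℂ) : Prop :=
  IsCPMap Φ ∧ ∀ ρ : Matrix m m ℂ, (Φ ρ).trace = ρ.trace

/-- A POVM with finite outcome set `X`: positive semidefinite effects summing to the identity. -/
def IsPOVM {X : Type} [Fintype X] {m : Type} [Fintype m] [DecidableEq m]
    (M : X → Matrix m m ℂ) : Prop :=
  (∀ x, (M x).PosSemidef) ∧ ∑ x, M x = 1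

/-- A PVM: a POVM all of whose effects are orthogonal projections. -/
def IsPVM {X : Type} [Fintype X] {m : Type} [Fintype m] [DecidableEq m]
    (M : X → Matrix m m ℂ) : Prop :=
  IsPOVM M ∧ ∀ x, (M x)ᴴ = M x ∧ M x * M x = M x

/-- `G` is generated through broadcasting from `M` and `N` if there is a channel `Φ`
such that `tr[Φ(ρ)(M x ⊗ N y)] = tr[ρ G x y]` for all `ρ, x, y`. -/
def GenByBroadcast {X Y : Type} [Fintype X] [Fintype Y]
    {d m n : Type} [Fintype d] [DecidableEq d] [Fintype m] [DecidableEq m]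
    [Fintype n] [DecidableEq n]
    (M : X → Matrix m m ℂ) (N : Y → Matrix n n ℂ)
    (G : X → Y → Matrix d d ℂ) : Prop :=
  ∃ Φ : Matrix d d ℂ →ₗ[ℂ] Matrix (m × n) (m × n) ℂ, IsChannel Φ ∧
    ∀ (ρ : Matrix d d ℂ) (x : X) (y : Y),
      (Φ ρ * (M x ⊗ₖ N y)).trace = (ρ * G x y).trace

section PsdFactor

open scoped MatrixOrder Matrix.Norms.L2Operator

private lemma psd_exists_conj {n : Type} [Fintype n] [DecidableEq n] {A : Matrix n n ℂ}
    (hA : A.PosSemidef) : ∃ C : Matrix n n ℂ, A = Cᴴ * C := by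
  obtain ⟨C, hC⟩ := CStarAlgebra.nonneg_iff_eq_star_mul_self.mp hA.nonneg
  exact ⟨C, hC⟩

end PsdFactor

section AuxLemmas

set_option linter.unusedSectionVars false

variable {n m : Type} [Fintype n] [DecidableEq n] [Fintype m] [DecidableEq m]

private lemma psd_trace_nonneg {A : Matrix n n ℂ} (hA : A.PosSemidef) : 0 ≤ A.trace := by
  rw [Matrix.trace]
  apply Finset.sum_nonneg
  intro i _
  have := hA.dotProduct_mulVec_nonneg (Pi.single i 1)
  simpa [dotProduct, Matrix.mulVec, Pi.single_apply] using this

private lemma psd_trace_mul_nonneg {A B : Matrix n n ℂ} (hA : A.PosSemidef)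
    (hB : B.PosSemidef) : 0 ≤ (A * B).trace := by
  obtain ⟨C, rfl⟩ := psd_exists_conj hB
  have h1 : (A * (Cᴴ * C)).trace = (C * A * Cᴴ).trace := by
    rw [← Matrix.trace_mul_cycle, mul_assoc]
  rw [h1]
  exact psd_trace_nonneg (hA.mul_mul_conjTranspose_same C)

private lemma psd_smul_real {c : ℝ} (hc : 0 ≤ c) {A : Matrix n n ℂ} (hA : A.PosSemidef) :
    (c • A).PosSemidef := by
  refine Matrix.PosSemidef.of_dotProduct_mulVec_nonneg ?_ ?_
  · unfold Matrix.IsHermitian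
    rw [Matrix.conjTranspose_smul, hA.1.eq]
    congr 1
  · intro x
    have h : star x ⬝ᵥ (c • A) *ᵥ x = (c : ℂ) * (star x ⬝ᵥ A *ᵥ x) := by
      rw [← algebraMap_smul ℂ c A]
      simp [Matrix.smul_mulVec, smul_eq_mul]
    rw [h]
    exact mul_nonneg (by exact_mod_cast hc) (hA.dotProduct_mulVec_nonneg x)

private lemma psd_kron {A : Matrix n n ℂ} {B : Matrix m m ℂ} (hA : A.PosSemidef)
    (hB : B.PosSemidef) : (A ⊗ₖ B).PosSemidef := by
  obtain ⟨C, rfl⟩ := psd_exists_conj hA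
  obtain ⟨D, rfl⟩ := psd_exists_conj hB
  have h : (Cᴴ * C) ⊗ₖ (Dᴴ * D) = (C ⊗ₖ D)ᴴ * (C ⊗ₖ D) := by
    ext ⟨i1, i2⟩ ⟨j1, j2⟩
    simp only [Matrix.mul_apply, Matrix.conjTranspose_apply, Matrix.kroneckerMap_apply,
      Fintype.sum_prod_type, Finset.sum_mul, Finset.mul_sum, star_mul']
    rw [Finset.sum_comm]
    apply Finset.sum_congr rfl; intro k1 _
    apply Finset.sum_congr rfl; intro k2 _
    ring
  rw [h]
  exact Matrix.posSemidef_conjTranspose_mul_self _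

private lemma psd_sum {ι : Type*} (s : Finset ι) (f : ι → Matrix n n ℂ)
    (h : ∀ i ∈ s, (f i).PosSemidef) : (∑ i ∈ s, f i).PosSemidef := by
  classical
  induction s using Finset.induction_on with
  | empty => simpa using Matrix.PosSemidef.zero
  | insert _ _ hx ih =>
    rw [Finset.sum_insert hx]
    exact (h _ (Finset.mem_insert_self _ _)).add
      (ih fun i hi => h i (Finset.mem_insert_of_mem hi))

private lemma psd_vecMulVec (v : n → ℂ) : (Matrix.vecMulVec v (star v)).PosSemidef := by
  have h : Matrix.vecMulVec v (star v)
      = (Matrix.replicateRow Unit (star v))ᴴ * Matrix.replicateRow Unit (star v) := by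
    ext i j
    simp [Matrix.vecMulVec_apply, Matrix.mul_apply, Matrix.replicateRow_apply,
      Matrix.conjTranspose_apply]
  rw [h]
  exact Matrix.posSemidef_conjTranspose_mul_self _

private lemma trace_vecMulVec_mul (v : n → ℂ) (A : Matrix n n ℂ) :
    (Matrix.vecMulVec v (star v) * A).trace = star v ⬝ᵥ A *ᵥ v := by
  simp only [Matrix.trace, Matrix.diag, Matrix.mul_apply, Matrix.vecMulVec_apply,
    dotProduct, Matrix.mulVec, Pi.star_apply]
  rw [Finset.sum_comm]
  refine Finset.sum_congr rfl fun t _ => ?_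
  rw [Finset.mul_sum]
  exact Finset.sum_congr rfl fun s _ => by ring

private lemma trace_vecMulVec (v : n → ℂ) :
    (Matrix.vecMulVec v (star v)).trace = star v ⬝ᵥ v := by
  simp only [Matrix.trace, Matrix.diag, Matrix.vecMulVec_apply, dotProduct, Pi.star_apply]
  exact Finset.sum_congr rfl fun i _ => mul_comm _ _

private lemma matrix_eq_zero_of_forall_mulVec {A : Matrix n m ℂ} (h : ∀ v, A *ᵥ v = 0) :
    A = 0 := by
  ext i j
  have := congrFun (h (Pi.single j 1)) i
  simpa [Matrix.mulVec_single] using this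

private lemma sum_psd_eq_zero {ι : Type*} {s : Finset ι} {f : ι → Matrix n n ℂ}
    (h : ∀ i ∈ s, (f i).PosSemidef) (hsum : ∑ i ∈ s, f i = 0) :
    ∀ i ∈ s, f i = 0 := by
  intro i hi
  apply matrix_eq_zero_of_forall_mulVec
  intro v
  have hq : ∀ j ∈ s, (0:ℂ) ≤ star v ⬝ᵥ (f j) *ᵥ v := fun j hj => (h j hj).dotProduct_mulVec_nonneg v
  have hz : ∑ j ∈ s, star v ⬝ᵥ (f j) *ᵥ v = 0 := by
    have h2 : ∀ j, star v ⬝ᵥ (f j) *ᵥ v = (Matrix.vecMulVec v (star v) * f j).trace :=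
      fun j => (trace_vecMulVec_mul v (f j)).symm
    simp only [h2]
    rw [← Matrix.trace_sum, ← Finset.mul_sum, hsum, mul_zero, Matrix.trace_zero]
  have := (Finset.sum_eq_zero_iff_of_nonneg hq).mp hz i hi
  exact ((h i hi).dotProduct_mulVec_zero_iff v).mp this

private lemma cp_pos {Φ : Matrix n n ℂ →ₗ[ℂ] Matrix m m ℂ} (hΦ : IsCPMap Φ)
    {A : Matrix n n ℂ} (hA : A.PosSemidef) : (Φ A).PosSemidef := by
  have hA' : (Matrix.of fun (p q : Fin 1 × n) => A p.2 q.2).PosSemidef := by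
    refine Matrix.PosSemidef.of_dotProduct_mulVec_nonneg ?_ ?_
    · ext ⟨i, a⟩ ⟨j, b⟩
      simp only [Matrix.conjTranspose_apply, Matrix.of_apply]
      exact congrFun (congrFun hA.1.eq _) _
    · intro x
      have h : star (fun a => x (0, a)) ⬝ᵥ A *ᵥ (fun a => x (0, a)) =
          star x ⬝ᵥ (Matrix.of fun (p q : Fin 1 × n) => A p.2 q.2) *ᵥ x := by
        simp only [dotProduct, Matrix.mulVec, Fintype.sum_prod_type, Fin.sum_univ_one,
          Pi.star_apply, Matrix.of_apply]
      rw [← h]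
      exact hA.dotProduct_mulVec_nonneg _
  have key := hΦ 1 _ hA'
  have h : Φ A = (Matrix.of fun (p q : Fin 1 × m) =>
      Φ (Matrix.of fun a b => (Matrix.of fun (p q : Fin 1 × n) => A p.2 q.2) (p.1, a) (q.1, b))
        p.2 q.2).submatrix (fun a => ((0 : Fin 1), a)) (fun a => ((0 : Fin 1), a)) := by
    ext a b
    simp only [Matrix.submatrix_apply, Matrix.of_apply]
    congr 1
  rw [h]
  exact key.submatrix _

private lemma psd_block_trace {k : ℕ} {A : Matrix (Fin k × n) (Fin k × n) ℂ}
    (hA : A.PosSemidef) {E : Matrix n n ℂ} (hE : E.PosSemidef) :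
    (Matrix.of fun a b : Fin k =>
      ((Matrix.of fun s t => A (a, s) (b, t)) * E).trace).PosSemidef := by
  refine Matrix.PosSemidef.of_dotProduct_mulVec_nonneg ?_ ?_
  · ext a b
    simp only [Matrix.conjTranspose_apply, Matrix.of_apply]
    rw [← Matrix.trace_conjTranspose, Matrix.conjTranspose_mul]
    have h1 : (Matrix.of fun s t => A (b, s) (a, t))ᴴ = Matrix.of fun s t => A (a, s) (b, t) := by
      ext s t
      simp only [Matrix.conjTranspose_apply, Matrix.of_apply]
      exact congrFun (congrFun hA.1.eq (a, s)) (b, t)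
    rw [h1, hE.1.eq, Matrix.trace_mul_comm]
  · intro c
    set C : Matrix (Fin k × n) n ℂ := Matrix.of fun p t => c p.1 * (1 : Matrix n n ℂ) p.2 t
      with hC
    have step4 : (∑ a : Fin k, ∑ b : Fin k,
        (star (c a) * c b) • (Matrix.of fun s t => A (a, s) (b, t))) = Cᴴ * A * C := by
      ext s t
      simp only [Matrix.sum_apply, Matrix.smul_apply, Matrix.of_apply, smul_eq_mul,
        Matrix.mul_apply, Matrix.conjTranspose_apply, hC, Fintype.sum_prod_type,
        Matrix.one_apply, mul_ite, ite_mul, mul_one, mul_zero, zero_mul, one_mul,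
        Finset.sum_ite_eq, Finset.sum_ite_eq',
        Finset.mem_univ, if_true, Finset.sum_mul, Finset.mul_sum]
      conv_rhs => rw [Finset.sum_comm]
      apply Finset.sum_congr rfl; intro a _
      apply Finset.sum_congr rfl; intro b _
      simp only [apply_ite (star (R := ℂ)), star_zero, ite_mul, zero_mul,
        Finset.sum_ite_eq', Finset.mem_univ, if_true]
      ring
    have key : star c ⬝ᵥ (Matrix.of fun a b : Fin k =>
        ((Matrix.of fun s t => A (a, s) (b, t)) * E).trace) *ᵥ c
        = ((Cᴴ * A * C) * E).trace := by
      rw [← step4, Finset.sum_mul, Matrix.trace_sum]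
      simp only [dotProduct, Matrix.mulVec, Matrix.of_apply, Pi.star_apply]
      apply Finset.sum_congr rfl; intro a _
      rw [Finset.sum_mul, Matrix.trace_sum, Finset.mul_sum]
      apply Finset.sum_congr rfl; intro b _
      rw [smul_mul_assoc, Matrix.trace_smul, smul_eq_mul]
      ring
    rw [key]
    exact psd_trace_mul_nonneg (hA.conjTranspose_mul_mul_same C) hE

private lemma pvm_orth {X : Type} [Fintype X] {P : X → Matrix n n ℂ}
    (hsum : ∑ x, P x = 1) (hherm : ∀ x, (P x)ᴴ = P x) (hidem : ∀ x, P x * P x = P x)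
    {x x' : X} (hne : x' ≠ x) : P x' * P x = 0 := by
  classical
  have hpsd : ∀ x, (P x).PosSemidef := by
    intro z
    have : P z = (P z)ᴴ * P z := by rw [hherm, hidem]
    rw [this]
    exact Matrix.posSemidef_conjTranspose_mul_self _
  have hmid : ∀ x'' ∈ Finset.univ.erase x, P x * P x'' * P x = 0 := by
    apply sum_psd_eq_zero
    · intro i _
      have := (hpsd i).conjTranspose_mul_mul_same (P x)
      rwa [hherm x] at this
    · have h1 : ∑ x'' : X, P x * P x'' * P x = P x := by
        calc ∑ x'' : X, P x * P x'' * P x = P x * (∑ x'' : X, P x'') * P x := by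
              rw [Finset.mul_sum, Finset.sum_mul]
          _ = P x := by rw [hsum, mul_one, hidem]
      have h2 := Finset.add_sum_erase Finset.univ (fun x'' => P x * P x'' * P x)
        (Finset.mem_univ x)
      rw [h1] at h2
      rw [hidem, hidem] at h2
      exact add_eq_left.mp h2
  have h3 : P x * P x' * P x = 0 := hmid x' (Finset.mem_erase.mpr ⟨hne, Finset.mem_univ _⟩)
  have h4 : (P x' * P x)ᴴ * (P x' * P x) = 0 := by
    rw [Matrix.conjTranspose_mul, hherm, hherm, mul_assoc, ← mul_assoc (P x'),
      hidem, ← mul_assoc, h3]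
  exact Matrix.conjTranspose_mul_self_eq_zero.mp h4

private lemma exists_unit_eigvec {A : Matrix n n ℂ} (hidem : A * A = A) (hne : A ≠ 0) :
    ∃ v : n → ℂ, A *ᵥ v = v ∧ star v ⬝ᵥ v = 1 := by
  have hw : ∃ w, A *ᵥ w ≠ 0 := by
    by_contra h
    push_neg at h
    exact hne (matrix_eq_zero_of_forall_mulVec h)
  obtain ⟨w, hw⟩ := hw
  set u := A *ᵥ w with hu
  have hAu : A *ᵥ u = u := by rw [hu, Matrix.mulVec_mulVec, hidem]
  set N : ℝ := ∑ i, Complex.normSq (u i) with hN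
  have hcoe : star u ⬝ᵥ u = (N : ℂ) := by
    simp only [dotProduct, Pi.star_apply, hN]
    push_cast
    refine Finset.sum_congr rfl fun i _ => ?_
    rw [Complex.star_def, mul_comm, Complex.mul_conj]
  have hNpos : 0 < N := by
    rcases Function.ne_iff.mp hw with ⟨i, hi⟩
    apply Finset.sum_pos' (fun j _ => Complex.normSq_nonneg _)
    exact ⟨i, Finset.mem_univ i, Complex.normSq_pos.mpr hi⟩
  set a : ℝ := (Real.sqrt N)⁻¹ with ha
  refine ⟨(a : ℂ) • u, ?_, ?_⟩
  · rw [Matrix.mulVec_smul, hAu]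
  · rw [star_smul, smul_dotProduct, dotProduct_smul, hcoe]
    simp only [smul_eq_mul, Complex.star_def, Complex.conj_ofReal]
    norm_cast
    rw [← mul_assoc, ha, ← mul_inv, Real.mul_self_sqrt hNpos.le]
    exact inv_mul_cancel₀ hNpos.ne'

private lemma kron_sum_right {ι : Type*} (s : Finset ι) (A : Matrix n n ℂ)
    (f : ι → Matrix m m ℂ) : ∑ i ∈ s, A ⊗ₖ f i = A ⊗ₖ (∑ i ∈ s, f i) := by
  ext ⟨i1, i2⟩ ⟨j1, j2⟩
  simp [Matrix.kroneckerMap_apply, Matrix.sum_apply, Finset.mul_sum]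

private lemma kron_sum_left {ι : Type*} (s : Finset ι) (A : Matrix n n ℂ)
    (f : ι → Matrix m m ℂ) : ∑ i ∈ s, f i ⊗ₖ A = (∑ i ∈ s, f i) ⊗ₖ A := by
  ext ⟨i1, i2⟩ ⟨j1, j2⟩
  simp [Matrix.kroneckerMap_apply, Matrix.sum_apply, Finset.sum_mul]

end AuxLemmas

/-- Corollary `cor:fuzzyPVM`: for PVMs `P`, `Q` with nonvanishing
effects mixed with white/coloured noise, a POVM `G` can be generated through broadcasting
from the noisy POVMs if and only if the marginal positivity condition holds. -/
theorem statement2 (D : ℕ) (hD : 1 ≤ D) (X Y : Type) [Fintype X] [Nonempty X]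
    [Fintype Y] [Nonempty Y]
    (P : X → Matrix (Fin D) (Fin D) ℂ) (Q : Y → Matrix (Fin D) (Fin D) ℂ)
    (hP : IsPVM P) (hQ : IsPVM Q)
    (hPne : ∀ x, P x ≠ 0) (hQne : ∀ y, Q y ≠ 0)
    (p : X → ℝ) (q : Y → ℝ)
    (hp0 : ∀ x, 0 ≤ p x) (hp1 : ∑ x, p x = 1)
    (hq0 : ∀ y, 0 ≤ q y) (hq1 : ∑ y, q y = 1)
    (l μ : ℝ) (hl : l ∈ Set.Ioc (0 : ℝ) 1) (hμ : μ ∈ Set.Ioc (0 : ℝ) 1)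
    (G : X → Y → Matrix (Fin D) (Fin D) ℂ)
    (hG : IsPOVM fun pr : X × Y => G pr.1 pr.2) :
    GenByBroadcast (fun x => l • P x + ((1 - l) * p x : ℝ) • (1 : Matrix (Fin D) (Fin D) ℂ))
      (fun y => μ • Q y + ((1 - μ) * q y : ℝ) • (1 : Matrix (Fin D) (Fin D) ℂ)) G ↔
    ∀ (x : X) (y : Y),
      (G x y - ((1 - μ) * q y : ℝ) • (∑ y', G x y')
        - ((1 - l) * p x : ℝ) • (∑ x', G x' y)
        + ((1 - l) * (1 - μ) * p x * q y : ℝ) • (1 : Matrix (Fin D) (Fin D) ℂ)).PosSemidef := by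
  obtain ⟨hl0, hl1⟩ := hl
  obtain ⟨hμ0, hμ1⟩ := hμ
  set M : X → Matrix (Fin D) (Fin D) ℂ :=
    fun x => l • P x + ((1 - l) * p x : ℝ) • (1 : Matrix (Fin D) (Fin D) ℂ) with hMdef
  set N : Y → Matrix (Fin D) (Fin D) ℂ :=
    fun y => μ • Q y + ((1 - μ) * q y : ℝ) • (1 : Matrix (Fin D) (Fin D) ℂ) with hNdef
  have hqs : ∑ y', ((1 - μ) * q y' : ℝ) = 1 - μ := by
    rw [← Finset.mul_sum, hq1, mul_one]
  have hps : ∑ x', ((1 - l) * p x' : ℝ) = 1 - l := by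
    rw [← Finset.mul_sum, hp1, mul_one]
  have hNsum : ∑ y', N y' = 1 := by
    simp only [hNdef]
    rw [Finset.sum_add_distrib, ← Finset.smul_sum, hQ.1.2, ← Finset.sum_smul, hqs]
    module
  have hMsum : ∑ x', M x' = 1 := by
    simp only [hMdef]
    rw [Finset.sum_add_distrib, ← Finset.smul_sum, hP.1.2, ← Finset.sum_smul, hps]
    module
  constructor
  · -- forward direction
    rintro ⟨Φ, ⟨hCP, hTP⟩, hEq⟩ x y
    refine Matrix.PosSemidef.of_dotProduct_mulVec_nonneg ?_ ?_
    · -- Hermitian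
      show _ᴴ = _
      have h1 : ∀ x y, (G x y)ᴴ = G x y := fun x y => (hG.1 (x, y)).1
      simp only [Matrix.conjTranspose_add, Matrix.conjTranspose_sub, Matrix.conjTranspose_smul,
        Matrix.conjTranspose_one, Matrix.conjTranspose_sum, h1, star_trivial]
    · intro c
      set ρ : Matrix (Fin D) (Fin D) ℂ := Matrix.vecMulVec c (star c) with hρ
      rw [← trace_vecMulVec_mul]
      have expand : ρ * (G x y - ((1 - μ) * q y : ℝ) • (∑ y', G x y')
          - ((1 - l) * p x : ℝ) • (∑ x', G x' y)
          + ((1 - l) * (1 - μ) * p x * q y : ℝ) • (1 : Matrix (Fin D) (Fin D) ℂ))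
          = ρ * G x y - ((1 - μ) * q y : ℝ) • (ρ * ∑ y', G x y')
          - ((1 - l) * p x : ℝ) • (ρ * ∑ x', G x' y)
          + ((1 - l) * (1 - μ) * p x * q y : ℝ) • (ρ * 1) := by
        simp only [mul_sub, mul_add, mul_smul_comm]
      rw [expand]
      simp only [Matrix.trace_sub, Matrix.trace_add, Matrix.trace_smul]
      have t0 : (ρ * G x y).trace = (Φ ρ * (M x ⊗ₖ N y)).trace := (hEq ρ x y).symm
      have t1 : (ρ * ∑ y', G x y').trace = (Φ ρ * (M x ⊗ₖ (1 : Matrix (Fin D) (Fin D) ℂ))).trace := by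
        rw [Finset.mul_sum, Matrix.trace_sum]
        have h2 : ∀ y', (ρ * G x y').trace = (Φ ρ * (M x ⊗ₖ N y')).trace :=
          fun y' => (hEq ρ x y').symm
        simp only [h2]
        rw [← Matrix.trace_sum, ← Finset.mul_sum, kron_sum_right, hNsum]
      have t2 : (ρ * ∑ x', G x' y).trace = (Φ ρ * ((1 : Matrix (Fin D) (Fin D) ℂ) ⊗ₖ N y)).trace := by
        rw [Finset.mul_sum, Matrix.trace_sum]
        have h2 : ∀ x', (ρ * G x' y).trace = (Φ ρ * (M x' ⊗ₖ N y)).trace :=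
          fun x' => (hEq ρ x' y).symm
        simp only [h2]
        rw [← Matrix.trace_sum, ← Finset.mul_sum, kron_sum_left, hMsum]
      have t3 : (ρ * 1).trace
          = (Φ ρ * ((1 : Matrix (Fin D) (Fin D) ℂ) ⊗ₖ (1 : Matrix (Fin D) (Fin D) ℂ))).trace := by
        rw [Matrix.one_kronecker_one, mul_one, mul_one, hTP]
      rw [t0, t1, t2, t3]
      have hK : M x ⊗ₖ N y - ((1 - μ) * q y : ℝ) • (M x ⊗ₖ (1 : Matrix (Fin D) (Fin D) ℂ))
          - ((1 - l) * p x : ℝ) • ((1 : Matrix (Fin D) (Fin D) ℂ) ⊗ₖ N y)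
          + ((1 - l) * (1 - μ) * p x * q y : ℝ) •
            ((1 : Matrix (Fin D) (Fin D) ℂ) ⊗ₖ (1 : Matrix (Fin D) (Fin D) ℂ))
          = (l * μ : ℝ) • (P x ⊗ₖ Q y) := by
        simp only [hMdef, hNdef, Matrix.add_kronecker, Matrix.kronecker_add,
          Matrix.smul_kronecker, Matrix.kronecker_smul]
        module
      have comb : (Φ ρ * (M x ⊗ₖ N y)).trace
          - ((1 - μ) * q y : ℝ) • (Φ ρ * (M x ⊗ₖ (1 : Matrix (Fin D) (Fin D) ℂ))).trace
          - ((1 - l) * p x : ℝ) • (Φ ρ * ((1 : Matrix (Fin D) (Fin D) ℂ) ⊗ₖ N y)).trace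
          + ((1 - l) * (1 - μ) * p x * q y : ℝ) •
            (Φ ρ * ((1 : Matrix (Fin D) (Fin D) ℂ) ⊗ₖ (1 : Matrix (Fin D) (Fin D) ℂ))).trace
          = ((l * μ : ℝ) : ℂ) * (Φ ρ * (P x ⊗ₖ Q y)).trace := by
        rw [← Matrix.trace_smul, ← Matrix.trace_smul, ← Matrix.trace_smul,
          ← mul_smul_comm, ← mul_smul_comm, ← mul_smul_comm,
          ← Matrix.trace_sub, ← Matrix.trace_sub, ← Matrix.trace_add,
          ← mul_sub, ← mul_sub, ← mul_add, hK, mul_smul_comm, Matrix.trace_smul,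
          Complex.real_smul]
      rw [comb]
      have hρpsd : ρ.PosSemidef := psd_vecMulVec c
      have hΦρ : (Φ ρ).PosSemidef := cp_pos hCP hρpsd
      have hPQ : (P x ⊗ₖ Q y).PosSemidef := psd_kron (hP.1.1 x) (hQ.1.1 y)
      have : (0:ℝ) ≤ l * μ := le_of_lt (mul_pos hl0 hμ0)
      exact mul_nonneg (by exact_mod_cast this) (psd_trace_mul_nonneg hΦρ hPQ)
  · -- backward direction
    intro hPos
    classical
    have hlμ : (0:ℝ) < l * μ := mul_pos hl0 hμ0
    set H : X → Y → Matrix (Fin D) (Fin D) ℂ := fun a b =>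
      G a b - ((1 - μ) * q b : ℝ) • (∑ y', G a y')
        - ((1 - l) * p a : ℝ) • (∑ x', G x' b)
        + ((1 - l) * (1 - μ) * p a * q b : ℝ) • (1 : Matrix (Fin D) (Fin D) ℂ) with hHdef
    have hHpsd : ∀ a b, (H a b).PosSemidef := fun a b => hPos a b
    set E : X → Y → Matrix (Fin D) (Fin D) ℂ :=
      fun a b => ((l * μ)⁻¹ : ℝ) • H a b with hEdef
    have hEpsd : ∀ a b, (E a b).PosSemidef :=
      fun a b => psd_smul_real (inv_nonneg.mpr hlμ.le) (hHpsd a b)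
    have hGtot : ∑ x', ∑ y', G x' y' = 1 := by
      have h := hG.2
      rwa [Fintype.sum_prod_type] at h
    have hGtot' : ∑ y', ∑ x', G x' y' = 1 := by rw [Finset.sum_comm]; exact hGtot
    have hHrow : ∀ a, ∑ b, H a b
        = μ • (∑ y', G a y') - (μ * ((1 - l) * p a)) • (1 : Matrix (Fin D) (Fin D) ℂ) := by
      intro a
      simp only [hHdef]
      rw [Finset.sum_add_distrib, Finset.sum_sub_distrib, Finset.sum_sub_distrib,
        ← Finset.sum_smul, hqs, ← Finset.sum_smul, ← Finset.smul_sum, hGtot']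
      have h4 : ∑ b, ((1 - l) * (1 - μ) * p a * q b : ℝ) = (1 - l) * (1 - μ) * p a := by
        rw [← Finset.mul_sum, hq1, mul_one]
      rw [h4]
      module
    have hHcol : ∀ b, ∑ a, H a b
        = l • (∑ x', G x' b) - (l * ((1 - μ) * q b)) • (1 : Matrix (Fin D) (Fin D) ℂ) := by
      intro b
      simp only [hHdef]
      rw [Finset.sum_add_distrib, Finset.sum_sub_distrib, Finset.sum_sub_distrib,
        ← Finset.smul_sum, hGtot, ← Finset.sum_smul, hps, ← Finset.sum_smul]
      have h4 : ∑ a, ((1 - l) * (1 - μ) * p a * q b : ℝ) = (1 - l) * (1 - μ) * q b := by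
        have : ∀ a, ((1 - l) * (1 - μ) * p a * q b : ℝ)
            = ((1 - l) * (1 - μ) * q b) * p a := fun a => by ring
        simp only [this]
        rw [← Finset.mul_sum, hp1, mul_one]
      rw [h4]
      module
    have hHtot : ∑ a, ∑ b, H a b = (l * μ : ℝ) • (1 : Matrix (Fin D) (Fin D) ℂ) := by
      simp only [hHrow]
      rw [Finset.sum_sub_distrib, ← Finset.smul_sum, hGtot, ← Finset.sum_smul]
      have h4 : ∑ a, (μ * ((1 - l) * p a) : ℝ) = μ * (1 - l) := by
        have : ∀ a, (μ * ((1 - l) * p a) : ℝ) = (μ * (1 - l)) * p a := fun a => by ring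
        simp only [this]
        rw [← Finset.mul_sum, hp1, mul_one]
      rw [h4]
      match_scalars
      ring
    have hEtot : ∑ a, ∑ b, E a b = 1 := by
      simp only [hEdef, ← Finset.smul_sum]
      rw [hHtot, smul_smul, inv_mul_cancel₀ hlμ.ne', one_smul]
    have hErow : ∀ a, ∑ b, E a b = ((l * μ)⁻¹ : ℝ) •
        (μ • (∑ y', G a y') - (μ * ((1 - l) * p a)) • (1 : Matrix (Fin D) (Fin D) ℂ)) := by
      intro a
      simp only [hEdef, ← Finset.smul_sum]
      rw [hHrow]
    have hEcol : ∀ b, ∑ a, E a b = ((l * μ)⁻¹ : ℝ) •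
        (l • (∑ x', G x' b) - (l * ((1 - μ) * q b)) • (1 : Matrix (Fin D) (Fin D) ℂ)) := by
      intro b
      simp only [hEdef, ← Finset.smul_sum]
      rw [hHcol]
    -- eigenvectors
    choose v hv1 hv2 using fun x => exists_unit_eigvec (hP.2 x).2 (hPne x)
    choose w hw1 hw2 using fun y => exists_unit_eigvec (hQ.2 y).2 (hQne y)
    have hPv : ∀ x a, P x *ᵥ v a = if a = x then v a else 0 := by
      intro x a
      by_cases h : a = x
      · subst h; simp [hv1]
      · rw [← hv1 a, Matrix.mulVec_mulVec,
          pvm_orth hP.1.2 (fun z => (hP.2 z).1) (fun z => (hP.2 z).2) (Ne.symm h),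
          Matrix.zero_mulVec, if_neg h]
    have hQw : ∀ y b, Q y *ᵥ w b = if b = y then w b else 0 := by
      intro y b
      by_cases h : b = y
      · subst h; simp [hw1]
      · rw [← hw1 b, Matrix.mulVec_mulVec,
          pvm_orth hQ.1.2 (fun z => (hQ.2 z).1) (fun z => (hQ.2 z).2) (Ne.symm h),
          Matrix.zero_mulVec, if_neg h]
    have hvtr : ∀ x a, (Matrix.vecMulVec (v a) (star (v a)) * M x).trace
        = (((if a = x then l else 0) + (1 - l) * p x : ℝ) : ℂ) := by
      intro x a
      rw [trace_vecMulVec_mul]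
      simp only [hMdef]
      rw [Matrix.add_mulVec, Matrix.smul_mulVec, Matrix.smul_mulVec,
        hPv x a, Matrix.one_mulVec, dotProduct_add, dotProduct_smul, dotProduct_smul, hv2]
      by_cases h : a = x
      · simp only [h, if_true]
        rw [hv2]
        simp only [Complex.real_smul, smul_eq_mul]
        push_cast
        ring
      · simp only [h, if_false]
        rw [dotProduct_zero]
        simp only [Complex.real_smul, smul_eq_mul, smul_zero]
        push_cast
        ring
    have hwtr : ∀ y b, (Matrix.vecMulVec (w b) (star (w b)) * N y).trace
        = (((if b = y then μ else 0) + (1 - μ) * q y : ℝ) : ℂ) := by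
      intro y b
      rw [trace_vecMulVec_mul]
      simp only [hNdef]
      rw [Matrix.add_mulVec, Matrix.smul_mulVec, Matrix.smul_mulVec,
        hQw y b, Matrix.one_mulVec, dotProduct_add, dotProduct_smul, dotProduct_smul, hw2]
      by_cases h : b = y
      · simp only [h, if_true]
        rw [hw2]
        simp only [Complex.real_smul, smul_eq_mul]
        push_cast
        ring
      · simp only [h, if_false]
        rw [dotProduct_zero]
        simp only [Complex.real_smul, smul_eq_mul, smul_zero]
        push_cast
        ring
    set S : X → Y → Matrix (Fin D × Fin D) (Fin D × Fin D) ℂ := fun a b =>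
      Matrix.vecMulVec (v a) (star (v a)) ⊗ₖ Matrix.vecMulVec (w b) (star (w b)) with hSdef
    have hSpsd : ∀ a b, (S a b).PosSemidef :=
      fun a b => psd_kron (psd_vecMulVec _) (psd_vecMulVec _)
    have hStr : ∀ a b, (S a b).trace = 1 := by
      intro a b
      rw [hSdef]
      simp only
      rw [Matrix.trace_kronecker, _root_.trace_vecMulVec, _root_.trace_vecMulVec, hv2, hw2, mul_one]
    -- the matrix claim
    have MC : ∀ x y, ∑ a, ∑ b,
        ((((if a = x then l else 0) + (1 - l) * p x)
          * ((if b = y then μ else 0) + (1 - μ) * q y) : ℝ)) • E a b = G x y := by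
      intro x y
      have hb : ∀ (F : Y → Matrix (Fin D) (Fin D) ℂ),
          ∑ b, (((if b = y then μ else 0) + (1 - μ) * q y : ℝ)) • F b
          = μ • F y + ((1 - μ) * q y : ℝ) • ∑ b, F b := by
        intro F
        simp only [add_smul, Finset.sum_add_distrib, ite_smul, zero_smul,
          Finset.sum_ite_eq', Finset.mem_univ, if_true, Finset.smul_sum]
      have ha : ∀ (F : X → Matrix (Fin D) (Fin D) ℂ),
          ∑ a, (((if a = x then l else 0) + (1 - l) * p x : ℝ)) • F a
          = l • F x + ((1 - l) * p x : ℝ) • ∑ a, F a := by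
        intro F
        simp only [add_smul, Finset.sum_add_distrib, ite_smul, zero_smul,
          Finset.sum_ite_eq', Finset.mem_univ, if_true, Finset.smul_sum]
      have step1 : ∀ a, ∑ b,
          ((((if a = x then l else 0) + (1 - l) * p x)
            * ((if b = y then μ else 0) + (1 - μ) * q y) : ℝ)) • E a b
          = (((if a = x then l else 0) + (1 - l) * p x : ℝ))
            • (μ • E a y + ((1 - μ) * q y : ℝ) • ∑ b, E a b) := by
        intro a
        rw [← hb (E a), Finset.smul_sum]
        refine Finset.sum_congr rfl fun b _ => ?_
        exact mul_smul _ _ _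
      simp only [step1]
      rw [ha (fun a => μ • E a y + ((1 - μ) * q y : ℝ) • ∑ b, E a b)]
      have t3 : ∑ a, (μ • E a y + ((1 - μ) * q y : ℝ) • ∑ b, E a b)
          = μ • (∑ a, E a y) + ((1 - μ) * q y : ℝ) • (∑ a, ∑ b, E a b) := by
        rw [Finset.sum_add_distrib, Finset.smul_sum, Finset.smul_sum]
      rw [t3, hErow x, hEcol y, hEtot]
      have hExy : E x y = ((l * μ)⁻¹ : ℝ) •
          (G x y - ((1 - μ) * q y : ℝ) • (∑ y', G x y')
            - ((1 - l) * p x : ℝ) • (∑ x', G x' y)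
            + ((1 - l) * (1 - μ) * p x * q y : ℝ) • (1 : Matrix (Fin D) (Fin D) ℂ)) := rfl
      rw [hExy]
      match_scalars <;> field_simp <;> ring
    -- the channel
    refine ⟨{ toFun := fun ρ => ∑ a : X, ∑ b : Y, (ρ * E a b).trace • S a b,
              map_add' := ?_, map_smul' := ?_ }, ⟨?_, ?_⟩, ?_⟩
    · intro ρ σ
      simp only [add_mul, Matrix.trace_add, add_smul, Finset.sum_add_distrib]
    · intro c ρ
      simp only [smul_mul_assoc, Matrix.trace_smul, smul_eq_mul, mul_smul,
        Finset.smul_sum, RingHom.id_apply]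
    · -- CP
      intro k A hA
      simp only [LinearMap.coe_mk, AddHom.coe_mk]
      have hrepr : (Matrix.of fun (pp qq : Fin k × (Fin D × Fin D)) =>
          (∑ a : X, ∑ b : Y,
            ((Matrix.of fun s t => A (pp.1, s) (qq.1, t)) * E a b).trace • S a b) pp.2 qq.2)
          = ∑ a : X, ∑ b : Y,
            ((Matrix.of fun i j : Fin k =>
              ((Matrix.of fun s t => A (i, s) (j, t)) * E a b).trace) ⊗ₖ S a b) := by
        ext ⟨pk, pd⟩ ⟨qk, qd⟩
        simp only [Matrix.of_apply, Matrix.sum_apply, Matrix.smul_apply,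
          Matrix.kroneckerMap_apply, smul_eq_mul]
      rw [hrepr]
      apply psd_sum
      intro a _
      apply psd_sum
      intro b _
      exact psd_kron (psd_block_trace hA (hEpsd a b)) (hSpsd a b)
    · -- trace preserving
      intro ρ
      simp only [LinearMap.coe_mk, AddHom.coe_mk]
      rw [Matrix.trace_sum]
      simp only [Matrix.trace_sum, Matrix.trace_smul, smul_eq_mul, hStr, mul_one]
      have h1 : ∑ a : X, ∑ b : Y, (ρ * E a b).trace = (ρ * ∑ a : X, ∑ b : Y, E a b).trace := by
        simp only [Finset.mul_sum, Matrix.trace_sum]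
      rw [h1, hEtot, mul_one]
    · -- trace identity
      intro ρ x y
      simp only [LinearMap.coe_mk, AddHom.coe_mk]
      rw [Finset.sum_mul, Matrix.trace_sum]
      have lhs1 : ∀ a, ((∑ b, (ρ * E a b).trace • S a b) * (M x ⊗ₖ N y)).trace
          = ∑ b, (ρ * E a b).trace *
            ((((if a = x then l else 0) + (1 - l) * p x : ℝ) : ℂ)
              * (((if b = y then μ else 0) + (1 - μ) * q y : ℝ) : ℂ)) := by
        intro a
        rw [Finset.sum_mul, Matrix.trace_sum]
        refine Finset.sum_congr rfl fun b _ => ?_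
        rw [smul_mul_assoc, Matrix.trace_smul, smul_eq_mul]
        congr 1
        rw [hSdef]
        simp only
        rw [← Matrix.mul_kronecker_mul, Matrix.trace_kronecker, hvtr, hwtr]
      simp only [lhs1]
      have rhs1 : (ρ * G x y).trace = ∑ a, ∑ b, (ρ * E a b).trace *
          ((((if a = x then l else 0) + (1 - l) * p x : ℝ) : ℂ)
            * (((if b = y then μ else 0) + (1 - μ) * q y : ℝ) : ℂ)) := by
        rw [← MC x y]
        rw [Finset.mul_sum, Matrix.trace_sum]
        refine Finset.sum_congr rfl fun a _ => ?_
        rw [Finset.mul_sum, Matrix.trace_sum]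
        refine Finset.sum_congr rfl fun b _ => ?_
        rw [mul_smul_comm, Matrix.trace_smul, Complex.real_smul]
        push_cast
        ring
      rw [rhs1]
end
end

section
/- Fix D ∈ ℕ, D ≥ 1, and let σ be a state on ℂ^D (positive semidefinite with trace 1). Define U := Σ_{k∈ℤ_D} U_k ⊗ |φ_k⟩⟨φ_k| on ℂ^D ⊗ ℂ^D, the parity unitary 𝒫 by 𝒫φ_m = φ_{−m}, the transpose σᵀ with respect to the basis (φ_m), and the map Φ(ρ) := U (𝒫σᵀ𝒫 ⊗ ρ) U* for D×D matrices ρ. Then Φ is a channel (trace-preserving and completely positive) and for all m, n ∈ ℤ_D and all D×D matrices ρ: tr[Φ(ρ) (|φ_m⟩⟨φ_m| ⊗ |ψ_n⟩⟨ψ_n|)] = tr[ρ G^σ_{m,n}], i.e., Φ generates the covariant phase-space POVM G^σ through broadcasting from the finite position PVM (|φ_m⟩⟨φ_m|)_{m∈ℤ_D} and momentum PVM (|ψ_n⟩⟨ψ_n|)_{n∈ℤ_D}. -/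
open Kronecker Matrix
open scoped ComplexOrder

noncomputable section

/-- `⟨m,n⟩ := e^{2πi m n / D}` for `m, n ∈ ℤ_D`. -/
def chr (D : ℕ) (m n : ZMod D) : ℂ :=
  Complex.exp (2 * Real.pi * Complex.I * m.val * n.val / D)

/-- The standard (position) basis vector `φ_m` of `ℂ^D`. -/
def ketphi (D : ℕ) (m : ZMod D) : ZMod D → ℂ :=
  fun m' => if m' = m then 1 else 0

/-- The momentum basis vector `ψ_n := D^{−1/2} Σ_m ⟨m,n⟩ φ_m` of `ℂ^D`. -/
def ketpsi (D : ℕ) (n : ZMod D) : ZMod D → ℂ :=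
  fun m => chr D m n / Real.sqrt D

/-- The rank-one operator `|u⟩⟨v|`. -/
def outer {d : Type} (u v : d → ℂ) : Matrix d d ℂ :=
  Matrix.vecMulVec u (star v)

/-- The shift unitary `U_k`, `U_k φ_m = φ_{m+k}`. -/
def shiftU (D : ℕ) (k : ZMod D) : Matrix (ZMod D) (ZMod D) ℂ :=
  Matrix.of fun m m' => if m = m' + k then 1 else 0

/-- The phase unitary `V_ℓ`, `V_ℓ φ_m = ⟨m,ℓ⟩ φ_m`. -/
def phaseV (D : ℕ) (l : ZMod D) : Matrix (ZMod D) (ZMod D) ℂ :=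
  Matrix.diagonal fun m => chr D m l

/-- The Weyl operator `W_{k,ℓ} := e^{iπ k̃ ℓ̃ / D} U_k V_ℓ`. -/
def weylW (D : ℕ) [NeZero D] (k l : ZMod D) : Matrix (ZMod D) (ZMod D) ℂ :=
  Complex.exp (Real.pi * Complex.I * k.val * l.val / D) • (shiftU D k * phaseV D l)

/-- The covariant phase-space POVM `G^σ_{m,n} := (1/D) W_{m,n} σ W_{m,n}^*`. -/
def Gcov (D : ℕ) [NeZero D] (σ : Matrix (ZMod D) (ZMod D) ℂ) (m n : ZMod D) :
    Matrix (ZMod D) (ZMod D) ℂ :=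
  ((D : ℂ))⁻¹ • (weylW D m n * σ * (weylW D m n)ᴴ)

/-- The parity unitary `𝒫`, `𝒫 φ_m = φ_{−m}`. -/
def parityP (D : ℕ) : Matrix (ZMod D) (ZMod D) ℂ :=
  Matrix.of fun m m' => if m = -m' then 1 else 0

/-- `σ^Q := Σ_m ⟨φ_m, σ φ_m⟩ |φ_m⟩⟨φ_m|`, the position-diagonal part of `σ`. -/
def sigmaQ (D : ℕ) [NeZero D] (σ : Matrix (ZMod D) (ZMod D) ℂ) :
    Matrix (ZMod D) (ZMod D) ℂ :=
  ∑ m, (star (ketphi D m) ⬝ᵥ σ.mulVec (ketphi D m)) • outer (ketphi D m) (ketphi D m)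

/-- `σ^P := Σ_n ⟨ψ_n, σ ψ_n⟩ |ψ_n⟩⟨ψ_n|`, the momentum-diagonal part of `σ`. -/
def sigmaP (D : ℕ) [NeZero D] (σ : Matrix (ZMod D) (ZMod D) ℂ) :
    Matrix (ZMod D) (ZMod D) ℂ :=
  ∑ n, (star (ketpsi D n) ⬝ᵥ σ.mulVec (ketpsi D n)) • outer (ketpsi D n) (ketpsi D n)

set_option linter.unusedSectionVars false

section Helpers

lemma conj_aux (D x y : ℕ) :
    (starRingEnd ℂ) (2 * Real.pi * Complex.I * x * y / D)
      = -(2 * Real.pi * Complex.I * x * y / D) := by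
  simp only [map_div₀, _root_.map_mul, Complex.conj_I, Complex.conj_ofReal, map_natCast, map_ofNat]
  ring

lemma chr_mul_conj (D : ℕ) [NeZero D] (a b n : ZMod D) :
    chr D a n * (starRingEnd ℂ) (chr D b n) = chr D (a - b) n := by
  have hD : (D : ℂ) ≠ 0 := Nat.cast_ne_zero.mpr (NeZero.ne D)
  obtain ⟨t, ht⟩ : ∃ t : ℤ, (a.val : ℤ) - b.val - ((a - b).val : ℤ) = D * t := by
    refine (ZMod.intCast_zmod_eq_zero_iff_dvd ((a.val : ℤ) - (b.val : ℤ) - ((a - b).val : ℤ)) D).mp ?_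
    push_cast [ZMod.natCast_val, ZMod.cast_id]
    ring
  have htc : (a.val : ℂ) - (b.val : ℂ) - ((a - b).val : ℂ) = D * t := by exact_mod_cast ht
  unfold chr
  rw [← Complex.exp_conj, ← Complex.exp_add, conj_aux]
  rw [show 2 * Real.pi * Complex.I * (a.val : ℂ) * (n.val : ℂ) / D +
      -(2 * Real.pi * Complex.I * (b.val : ℂ) * (n.val : ℂ) / D)
      = 2 * Real.pi * Complex.I * (((a - b).val : ℂ)) * (n.val : ℂ) / D
        + ((t * (n.val : ℤ) : ℤ) : ℂ) * (2 * Real.pi * Complex.I) from by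
    rw [Int.cast_mul, Int.cast_natCast]
    field_simp
    linear_combination ((n.val : ℂ)) * htc]
  rw [Complex.exp_add, Complex.exp_int_mul_two_pi_mul_I, mul_one]

lemma posSemidef_add {n : Type} [Fintype n] {A B : Matrix n n ℂ}
    (hA : A.PosSemidef) (hB : B.PosSemidef) : (A + B).PosSemidef :=
  hA.add hB

lemma posSemidef_sum {n ι : Type} [Fintype n] (s : Finset ι) (f : ι → Matrix n n ℂ)
    (h : ∀ i ∈ s, (f i).PosSemidef) : (∑ i ∈ s, f i).PosSemidef := by
  classical
  induction s using Finset.induction with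
  | empty => simpa using Matrix.PosSemidef.zero
  | insert _ _ hx ih =>
    rw [Finset.sum_insert hx]
    exact posSemidef_add (h _ (Finset.mem_insert_self _ _))
      (ih fun i hi => h i (Finset.mem_insert_of_mem hi))

lemma isCPMap_kraus {d n : Type} [Fintype d] [DecidableEq d] [Fintype n] [DecidableEq n]
    {ι : Type} [Fintype ι] (L : ι → Matrix n d ℂ)
    (Φ : Matrix d d ℂ →ₗ[ℂ] Matrix n n ℂ)
    (hΦ : ∀ ρ, Φ ρ = ∑ a, L a * ρ * (L a)ᴴ) : IsCPMap Φ := by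
  intro k A hA
  have key : (Matrix.of fun (p q : Fin k × n) =>
      Φ (Matrix.of fun a b => A (p.1, a) (q.1, b)) p.2 q.2)
      = ∑ c, ((Matrix.of fun (p : Fin k × n) (q : Fin k × d) =>
          if p.1 = q.1 then L c p.2 q.2 else 0) * A *
        (Matrix.of fun (p : Fin k × n) (q : Fin k × d) =>
          if p.1 = q.1 then L c p.2 q.2 else 0)ᴴ) := by
    ext p q
    rw [Matrix.of_apply, hΦ, Matrix.sum_apply, Matrix.sum_apply]
    refine Finset.sum_congr rfl fun c _ => ?_
    simp only [Matrix.mul_apply, Matrix.conjTranspose_apply, Matrix.of_apply,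
      Fintype.sum_prod_type, Finset.sum_mul, Finset.mul_sum, ite_mul, zero_mul,
      mul_ite, mul_zero, apply_ite (star : ℂ → ℂ), star_zero,
      Finset.sum_ite_eq, Finset.sum_ite_eq', Finset.mem_univ, if_true]
    conv_rhs => rw [Finset.sum_comm]
    simp only [Finset.sum_ite_eq, Finset.mem_univ, if_true]
    conv_rhs => enter [2, x1]; rw [Finset.sum_comm]
    simp only [Finset.sum_ite_eq, Finset.mem_univ, if_true]
  rw [key]
  exact posSemidef_sum _ _ fun c _ => hA.mul_mul_conjTranspose_same _

variable (D : ℕ) [NeZero D]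

lemma shiftU_apply (k : ZMod D) (a b : ZMod D) :
    shiftU D k a b = if b = a - k then 1 else 0 := by
  have : (a = b + k) ↔ (b = a - k) := by constructor <;> intro h <;> simp [h]
  simp [shiftU, this]

lemma U_apply (i j : ZMod D × ZMod D) :
    (∑ k : ZMod D, shiftU D k ⊗ₖ outer (ketphi D k) (ketphi D k)) i j
      = if j = (i.1 - i.2, i.2) then 1 else 0 := by
  rw [Matrix.sum_apply]
  simp only [kroneckerMap_apply, shiftU_apply, outer, vecMulVec_apply, Pi.star_apply,
    ketphi, apply_ite (star : ℂ → ℂ), star_one, star_zero, ite_mul, mul_ite,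
    zero_mul, mul_zero, one_mul, mul_one]
  rw [Finset.sum_ite_eq Finset.univ j.2]
  simp only [Finset.mem_univ, if_true]
  by_cases h1 : i.2 = j.2
  · rw [if_pos h1, h1]
    by_cases h2 : j.1 = i.1 - j.2
    · rw [if_pos h2, if_pos (show j = (i.1 - j.2, j.2) from Prod.ext h2 rfl)]
    · rw [if_neg h2, if_neg (show ¬ j = (i.1 - j.2, j.2) from
        fun h => h2 (congrArg Prod.fst h))]
  · rw [if_neg h1, if_neg (show ¬ j = (i.1 - i.2, i.2) from
      fun h => h1 (congrArg Prod.snd h).symm)]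

lemma parityP_apply' (a b : ZMod D) : parityP D a b = if b = -a then 1 else 0 := by
  have : (a = -b) ↔ (b = -a) := by constructor <;> intro h <;> simp [h]
  simp [parityP, this]

lemma parityP_conj : (parityP D)ᴴ = parityP D := by
  ext a b
  rw [conjTranspose_apply, parityP_apply', parityP_apply']
  have : (a = -b) ↔ (b = -a) := by constructor <;> intro h <;> simp [h]
  simp [apply_ite (star : ℂ → ℂ), this]

lemma parityP_mul (X : Matrix (ZMod D) (ZMod D) ℂ) :
    parityP D * X = Matrix.of fun a b => X (-a) b := by
  ext a b
  rw [Matrix.mul_apply]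
  simp only [parityP, Matrix.of_apply, ite_mul, zero_mul, one_mul]
  rw [Finset.sum_eq_single (-a)]
  · simp
  · intro r _ hr
    rw [if_neg]
    intro h
    exact hr (by simp [h])
  · simp

lemma mul_parityP (X : Matrix (ZMod D) (ZMod D) ℂ) :
    X * parityP D = Matrix.of fun a b => X a (-b) := by
  ext a b
  rw [Matrix.mul_apply]
  simp only [parityP, Matrix.of_apply, mul_ite, mul_zero, mul_one]
  rw [Finset.sum_ite_eq' Finset.univ (-b)]
  simp

lemma parityP_mul_mul (X : Matrix (ZMod D) (ZMod D) ℂ) :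
    parityP D * X * parityP D = Matrix.of fun a b => X (-a) (-b) := by
  rw [mul_parityP, parityP_mul]
  rfl

abbrev Umat : Matrix (ZMod D × ZMod D) (ZMod D × ZMod D) ℂ :=
  ∑ k : ZMod D, shiftU D k ⊗ₖ outer (ketphi D k) (ketphi D k)

lemma Umat_mul (X : Matrix (ZMod D × ZMod D) (ZMod D × ZMod D) ℂ) :
    Umat D * X = Matrix.of fun i j => X (i.1 - i.2, i.2) j := by
  ext i j
  rw [Matrix.mul_apply]
  simp only [U_apply, ite_mul, zero_mul, one_mul]
  rw [Finset.sum_ite_eq' Finset.univ (i.1 - i.2, i.2)]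
  simp

lemma mul_Umat_conjT (X : Matrix (ZMod D × ZMod D) (ZMod D × ZMod D) ℂ) :
    X * (Umat D)ᴴ = Matrix.of fun i j => X i (j.1 - j.2, j.2) := by
  ext i j
  rw [Matrix.mul_apply]
  simp only [conjTranspose_apply, U_apply, apply_ite (star : ℂ → ℂ), star_one, star_zero,
    mul_ite, mul_zero, mul_one]
  rw [Finset.sum_ite_eq' Finset.univ (j.1 - j.2, j.2)]
  simp

lemma Umat_unitary : (Umat D)ᴴ * Umat D = 1 := by
  ext i j
  rw [Matrix.mul_apply]
  simp only [conjTranspose_apply, U_apply, apply_ite (star : ℂ → ℂ), star_one, star_zero,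
    ite_mul, zero_mul, one_mul, mul_ite, mul_zero, mul_one]
  rw [Finset.sum_eq_single (i.1 + i.2, i.2)]
  · simp only [add_sub_cancel_right, Prod.mk.eta]
    by_cases h : i = j
    · subst h; simp
    · rw [one_apply_ne h, if_neg (fun hh : j = i => h hh.symm)]
  · intro r _ hr
    by_cases h1 : i = (r.1 - r.2, r.2)
    · have h2 : i.2 = r.2 := (Prod.ext_iff.mp h1).2
      have h3 : i.1 = r.1 - r.2 := (Prod.ext_iff.mp h1).1
      apply absurd _ hr
      refine Prod.ext_iff.mpr ⟨?_, ?_⟩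
      · show r.1 = i.1 + i.2
        rw [h3, h2]; ring
      · exact h2.symm
    · simp [h1]
  · simp

lemma shiftU_mul (k : ZMod D) (X : Matrix (ZMod D) (ZMod D) ℂ) :
    shiftU D k * X = Matrix.of fun a b => X (a - k) b := by
  ext a b
  rw [Matrix.mul_apply]
  simp only [shiftU_apply, ite_mul, zero_mul, one_mul]
  rw [Finset.sum_ite_eq' Finset.univ (a - k)]
  simp

lemma mul_shiftU_conjT (k : ZMod D) (X : Matrix (ZMod D) (ZMod D) ℂ) :
    X * (shiftU D k)ᴴ = Matrix.of fun a b => X a (b - k) := by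
  ext a b
  rw [Matrix.mul_apply]
  simp only [conjTranspose_apply, shiftU_apply, apply_ite (star : ℂ → ℂ), star_one, star_zero,
    mul_ite, mul_zero]
  rw [Finset.sum_ite_eq' Finset.univ (b - k)]
  simp

lemma phase_conj_entry (n : ZMod D) (σ : Matrix (ZMod D) (ZMod D) ℂ) :
    phaseV D n * σ * (phaseV D n)ᴴ
      = Matrix.of fun a b => chr D a n * σ a b * star (chr D b n) := by
  ext a b
  simp [phaseV, Matrix.diagonal_conjTranspose, Matrix.diagonal_mul, Matrix.mul_diagonal,
    mul_comm, mul_assoc, mul_left_comm]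

lemma conj_aux2 (x y : ℕ) :
    (starRingEnd ℂ) ((Real.pi : ℂ) * Complex.I * x * y / D)
      = -((Real.pi : ℂ) * Complex.I * x * y / D) := by
  simp only [map_div₀, _root_.map_mul, Complex.conj_I, Complex.conj_ofReal, map_natCast]
  ring

lemma weyl_conj (m n : ZMod D) (σ : Matrix (ZMod D) (ZMod D) ℂ) :
    (Complex.exp ((Real.pi : ℂ) * Complex.I * (m.val : ℂ) * (n.val : ℂ) / D) •
        (shiftU D m * phaseV D n)) * σ *
      (Complex.exp ((Real.pi : ℂ) * Complex.I * (m.val : ℂ) * (n.val : ℂ) / D) •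
        (shiftU D m * phaseV D n))ᴴ
      = shiftU D m * (phaseV D n * σ * (phaseV D n)ᴴ) * (shiftU D m)ᴴ := by
  rw [Matrix.conjTranspose_smul, Matrix.smul_mul, Matrix.mul_smul, Matrix.smul_mul,
    smul_smul]
  rw [Complex.star_def, ← Complex.exp_conj, conj_aux2, mul_comm, ← Complex.exp_add,
    add_neg_cancel, Complex.exp_zero, one_smul]
  rw [Matrix.conjTranspose_mul]
  noncomm_ring

lemma kron_conjT {m n : Type} [Fintype m] [Fintype n]
    (A : Matrix m m ℂ) (B : Matrix n n ℂ) : (A ⊗ₖ B)ᴴ = Aᴴ ⊗ₖ Bᴴ := by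
  ext i j
  simp [conjTranspose_apply, kroneckerMap_apply, StarMul.star_mul, mul_comm]

def Kiso (D : ℕ) (a : ZMod D) : Matrix (ZMod D × ZMod D) (ZMod D) ℂ :=
  Matrix.of fun p j => if p.1 = a ∧ p.2 = j then 1 else 0

lemma Kiso_mul (a : ZMod D) (ρ : Matrix (ZMod D) (ZMod D) ℂ) :
    Kiso D a * ρ = Matrix.of fun p j => if p.1 = a then ρ p.2 j else 0 := by
  ext p j
  rw [Matrix.mul_apply]
  simp only [Kiso, Matrix.of_apply, ite_and, ite_mul, zero_mul, one_mul]
  by_cases h : p.1 = a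
  · simp [h, Finset.sum_ite_eq]
  · simp [h]

lemma mul_Kiso_conjT (a : ZMod D) (X : Matrix (ZMod D × ZMod D) (ZMod D) ℂ) :
    X * (Kiso D a)ᴴ = Matrix.of fun p q => if q.1 = a then X p q.2 else 0 := by
  ext p q
  rw [Matrix.mul_apply]
  simp only [conjTranspose_apply, Kiso, Matrix.of_apply, ite_and,
    apply_ite (star : ℂ → ℂ), star_one, star_zero, mul_ite, mul_zero, mul_one]
  by_cases h : q.1 = a
  · simp [h, Finset.sum_ite_eq]
  · simp [h]

lemma Kiso_sum (ρ : Matrix (ZMod D) (ZMod D) ℂ) :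
    ∑ a : ZMod D, Kiso D a * ρ * (Kiso D a)ᴴ = (1 : Matrix (ZMod D) (ZMod D) ℂ) ⊗ₖ ρ := by
  ext p q
  rw [Matrix.sum_apply]
  simp only [mul_Kiso_conjT, Kiso_mul, Matrix.of_apply]
  rw [Finset.sum_ite_eq Finset.univ q.1]
  simp only [Finset.mem_univ, if_true, kroneckerMap_apply, one_apply]
  by_cases h : p.1 = q.1
  · simp [h]
  · simp only [if_neg h, zero_mul]


lemma trace_formula {μ : Type} [Fintype μ] (A B : Matrix μ μ ℂ) :
    (A * B).trace = ∑ i, ∑ j, A i j * B j i := by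
  simp [Matrix.trace, Matrix.diag, Matrix.mul_apply]

end Helpers

/-- for a state `σ` on `ℂ^D`, the map
`ρ ↦ U (𝒫σᵀ𝒫 ⊗ ρ) U*`, with `U = Σ_k U_k ⊗ |φ_k⟩⟨φ_k|`, is a channel generating the
covariant phase-space POVM `G^σ` through broadcasting from the finite position and
momentum PVMs. -/
theorem statement9 (D : ℕ) [NeZero D] (σ : Matrix (ZMod D) (ZMod D) ℂ)
    (hσ : σ.PosSemidef) (hσtr : σ.trace = 1) :
    ∃ Φ : Matrix (ZMod D) (ZMod D) ℂ →ₗ[ℂ] Matrix (ZMod D × ZMod D) (ZMod D × ZMod D) ℂ,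
      (∀ ρ : Matrix (ZMod D) (ZMod D) ℂ,
        Φ ρ = (∑ k : ZMod D, shiftU D k ⊗ₖ outer (ketphi D k) (ketphi D k)) *
          ((parityP D * σ.transpose * parityP D) ⊗ₖ ρ) *
          (∑ k : ZMod D, shiftU D k ⊗ₖ outer (ketphi D k) (ketphi D k))ᴴ) ∧
      IsChannel Φ ∧
      ∀ (ρ : Matrix (ZMod D) (ZMod D) ℂ) (m n : ZMod D),
        (Φ ρ * (outer (ketphi D m) (ketphi D m) ⊗ₖ outer (ketpsi D n) (ketpsi D n))).trace
          = (ρ * Gcov D σ m n).trace := by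
  classical
  have hτps : (parityP D * σ.transpose * parityP D).PosSemidef := by
    have h := hσ.transpose.mul_mul_conjTranspose_same (parityP D)
    rwa [parityP_conj] at h
  set τ : Matrix (ZMod D) (ZMod D) ℂ := parityP D * σ.transpose * parityP D with hτdef
  obtain ⟨C, hC⟩ : ∃ C : Matrix (ZMod D) (ZMod D) ℂ, τ = Cᴴ * C :=
    by open scoped MatrixOrder in exact CStarAlgebra.nonneg_iff_eq_star_mul_self.mp hτps.nonneg
  have hτtr : τ.trace = 1 := by
    rw [hτdef, parityP_mul_mul, Matrix.trace]
    simp only [Matrix.diag_apply, Matrix.of_apply, Matrix.transpose_apply]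
    rw [Fintype.sum_equiv (Equiv.neg (ZMod D)) (fun x => σ (-x) (-x)) (fun x => σ x x)
      (by intro x; simp)]
    simpa [Matrix.trace, Matrix.diag] using hσtr
  refine ⟨{ toFun := fun ρ => Umat D * (τ ⊗ₖ ρ) * (Umat D)ᴴ
            map_add' := fun x y => by
              rw [Matrix.kronecker_add, Matrix.mul_add, Matrix.add_mul]
            map_smul' := fun c x => by
              simp only [Matrix.kronecker_smul, Matrix.mul_smul, Matrix.smul_mul,
                RingHom.id_apply] },
          fun ρ => rfl, ⟨?_, ?_⟩, ?_⟩
  · -- completely positive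
    apply isCPMap_kraus (fun a => Umat D * ((Cᴴ) ⊗ₖ (1 : Matrix (ZMod D) (ZMod D) ℂ)) * Kiso D a)
    intro ρ
    show Umat D * (τ ⊗ₖ ρ) * (Umat D)ᴴ = _
    have step : ∀ a : ZMod D,
        (Umat D * ((Cᴴ) ⊗ₖ (1 : Matrix (ZMod D) (ZMod D) ℂ)) * Kiso D a) * ρ *
          (Umat D * ((Cᴴ) ⊗ₖ (1 : Matrix (ZMod D) (ZMod D) ℂ)) * Kiso D a)ᴴ
        = (Umat D * ((Cᴴ) ⊗ₖ (1 : Matrix (ZMod D) (ZMod D) ℂ))) *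
            (Kiso D a * ρ * (Kiso D a)ᴴ) *
            (Umat D * ((Cᴴ) ⊗ₖ (1 : Matrix (ZMod D) (ZMod D) ℂ)))ᴴ := by
      intro a
      rw [Matrix.conjTranspose_mul]
      simp only [Matrix.mul_assoc]
    rw [Finset.sum_congr rfl fun a _ => step a, ← Finset.sum_mul, ← Finset.mul_sum, Kiso_sum]
    rw [Matrix.conjTranspose_mul, kron_conjT, Matrix.conjTranspose_one,
      Matrix.conjTranspose_conjTranspose]
    have hmid : ((Cᴴ) ⊗ₖ (1 : Matrix (ZMod D) (ZMod D) ℂ)) *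
        ((1 : Matrix (ZMod D) (ZMod D) ℂ) ⊗ₖ ρ) *
        ((C) ⊗ₖ (1 : Matrix (ZMod D) (ZMod D) ℂ)) = τ ⊗ₖ ρ := by
      rw [← Matrix.mul_kronecker_mul, ← Matrix.mul_kronecker_mul, Matrix.mul_one,
        Matrix.one_mul, Matrix.mul_one, ← hC]
    rw [← hmid]
    simp only [Matrix.mul_assoc]
  · -- trace preserving
    intro ρ
    show (Umat D * (τ ⊗ₖ ρ) * (Umat D)ᴴ).trace = ρ.trace
    rw [Matrix.trace_mul_cycle, Umat_unitary, Matrix.one_mul,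
      Matrix.trace_kronecker, hτtr, one_mul]
  · -- generates the POVM
    intro ρ m n
    have hΦρ : Umat D * (τ ⊗ₖ ρ) * (Umat D)ᴴ
        = Matrix.of (fun i j => τ (i.1 - i.2) (j.1 - j.2) * ρ i.2 j.2) := by
      rw [mul_Umat_conjT, Umat_mul]
      ext i j
      simp [kroneckerMap_apply]
    have hG : Gcov D σ m n = Matrix.of (fun a b =>
        (D:ℂ)⁻¹ * (chr D (a - m) n * σ (a - m) (b - m) * star (chr D (b - m) n))) := by
      unfold Gcov weylW
      rw [weyl_conj, phase_conj_entry, mul_shiftU_conjT, shiftU_mul]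
      ext a b
      simp [Matrix.smul_apply]
    show (Umat D * (τ ⊗ₖ ρ) * (Umat D)ᴴ *
        (outer (ketphi D m) (ketphi D m) ⊗ₖ outer (ketpsi D n) (ketpsi D n))).trace
      = (ρ * Gcov D σ m n).trace
    rw [hΦρ, hG, trace_formula, trace_formula]
    have term : ∀ i j : ZMod D,
        (τ (m - i) (m - j) * ρ i j) * (ketpsi D n j * star (ketpsi D n i))
        = ρ i j * ((D:ℂ)⁻¹ * (chr D (j - m) n * σ (j - m) (i - m) * star (chr D (i - m) n))) := by
      intro i j
      have hτe : τ (m - i) (m - j) = σ (j - m) (i - m) := by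
        rw [hτdef, parityP_mul_mul]
        simp [Matrix.transpose_apply, neg_sub]
      have hD2 : ((Real.sqrt D : ℝ) : ℂ) * ((Real.sqrt D : ℝ) : ℂ) = (D : ℂ) := by
        rw [← Complex.ofReal_mul, Real.mul_self_sqrt (Nat.cast_nonneg D)]
        norm_cast
      have hpsi : ketpsi D n j * star (ketpsi D n i) = chr D j n * star (chr D i n) / D := by
        unfold ketpsi
        simp only [Complex.star_def, map_div₀, Complex.conj_ofReal, div_mul_div_comm, hD2]
      have hchr : chr D j n * star (chr D i n) = chr D (j - m) n * star (chr D (i - m) n) := by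
        simp only [Complex.star_def]
        rw [chr_mul_conj, chr_mul_conj]
        congr 1
        ring
      rw [hτe, hpsi, div_eq_mul_inv]
      linear_combination (ρ i j * σ (j - m) (i - m) * (D:ℂ)⁻¹) * hchr
    simp only [Matrix.of_apply, kroneckerMap_apply, outer, vecMulVec_apply, Pi.star_apply,
      ketphi, apply_ite (star : ℂ → ℂ), star_one, star_zero]
    rw [Fintype.sum_prod_type]
    rw [Finset.sum_eq_single m (fun b _ hb => Finset.sum_eq_zero fun i2 _ =>
      Finset.sum_eq_zero fun j _ => by simp [hb]) (by simp)]
    refine Finset.sum_congr rfl fun i2 _ => ?_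
    rw [Fintype.sum_prod_type]
    rw [Finset.sum_eq_single m (fun b _ hb => Finset.sum_eq_zero fun j2 _ => by simp [hb])
      (by simp)]
    refine Finset.sum_congr rfl fun j2 _ => ?_
    simpa using term i2 j2
end
end

section
/- Fix D ∈ ℕ, D ≥ 1, and let σ be a state on ℂ^D. The margins of the covariant phase-space POVM G^σ are given by: Σ_{n∈ℤ_D} G^σ_{m,n} = Σ_{k∈ℤ_D} ⟨φ_{k−m}, σ φ_{k−m}⟩ |φ_k⟩⟨φ_k| = U_m σ^Q U_m^* for all m ∈ ℤ_D, and Σ_{m∈ℤ_D} G^σ_{m,n} = Σ_{k∈ℤ_D} ⟨ψ_{k−n}, σ ψ_{k−n}⟩ |ψ_k⟩⟨ψ_k| = V_n σ^P V_n^* for all n ∈ ℤ_D, where σ^Q := Σ_{m∈ℤ_D} ⟨φ_m, σφ_m⟩ |φ_m⟩⟨φ_m| and σ^P := Σ_{n∈ℤ_D} ⟨ψ_n, σψ_n⟩ |ψ_n⟩⟨ψ_n|. -/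
open Kronecker Matrix
open scoped ComplexOrder

noncomputable section

def eD (D : ℕ) (t : ℤ) : ℂ := Complex.exp (2 * Real.pi * Complex.I * t / D)

lemma eD_add (D : ℕ) (s t : ℤ) : eD D (s + t) = eD D s * eD D t := by
  rw [eD, eD, eD, ← Complex.exp_add]; congr 1; push_cast; ring

lemma eD_zero (D : ℕ) : eD D 0 = 1 := by simp [eD]

lemma two_pi_I_ne : (2 : ℂ) * Real.pi * Complex.I ≠ 0 := by
  simp [Real.pi_ne_zero, Complex.I_ne_zero]

lemma eD_eq_one_iff (D : ℕ) [NeZero D] (t : ℤ) : eD D t = 1 ↔ (D : ℤ) ∣ t := by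
  have hD : (D : ℂ) ≠ 0 := Nat.cast_ne_zero.mpr (NeZero.ne D)
  rw [eD, Complex.exp_eq_one_iff]
  constructor
  · rintro ⟨n, hn⟩
    refine ⟨n, ?_⟩
    have h : (2 : ℂ) * Real.pi * Complex.I * t = 2 * Real.pi * Complex.I * ((D:ℂ) * n) := by
      field_simp at hn
      rw [hn]
    have h2 := mul_left_cancel₀ two_pi_I_ne h
    exact_mod_cast h2
  · rintro ⟨n, rfl⟩
    refine ⟨n, ?_⟩
    rw [div_eq_iff hD]
    push_cast
    ring

lemma eD_dvd (D : ℕ) [NeZero D] {t : ℤ} (h : (D : ℤ) ∣ t) : eD D t = 1 :=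
  (eD_eq_one_iff D t).mpr h

lemma eD_congr (D : ℕ) [NeZero D] {s t : ℤ} (h : (s : ZMod D) = (t : ZMod D)) :
    eD D s = eD D t := by
  have hd : (D : ℤ) ∣ (s - t) := by
    rwa [← ZMod.intCast_zmod_eq_zero_iff_dvd, Int.cast_sub, sub_eq_zero]
  calc eD D s = eD D (t + (s - t)) := by ring_nf
    _ = eD D t * eD D (s - t) := eD_add D t (s - t)
    _ = eD D t := by rw [eD_dvd D hd, mul_one]

lemma eD_nat_mul (D : ℕ) (k : ℕ) (t : ℤ) : eD D (k * t) = eD D t ^ k := by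
  induction k with
  | zero => simp [eD_zero]
  | succ k ih => push_cast; rw [add_mul, one_mul, eD_add, ih, pow_succ]

lemma sum_eD (D : ℕ) [NeZero D] (t : ℤ) :
    ∑ k : ZMod D, eD D (k.val * t) = if (t : ZMod D) = 0 then (D : ℂ) else 0 := by
  have hsum : ∑ k : ZMod D, eD D (k.val * t) = ∑ j ∈ Finset.range D, eD D t ^ j := by
    refine Finset.sum_nbij' (fun k => k.val) (fun j => (j : ZMod D)) ?_ ?_ ?_ ?_ ?_
    · intro k _; exact Finset.mem_range.mpr (ZMod.val_lt k)
    · simp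
    · intro k _; simp [ZMod.natCast_val, ZMod.cast_id]
    · intro j hj; exact ZMod.val_natCast_of_lt (Finset.mem_range.mp hj)
    · intro k _; rw [← eD_nat_mul]
  rw [hsum]
  by_cases h : (t : ZMod D) = 0
  · have : eD D t = 1 := eD_dvd D ((ZMod.intCast_zmod_eq_zero_iff_dvd t D).mp h)
    simp [this, h]
  · have h1 : eD D t ≠ 1 := fun hc =>
      h ((ZMod.intCast_zmod_eq_zero_iff_dvd t D).mpr ((eD_eq_one_iff D t).mp hc))
    rw [geom_sum_eq h1, if_neg h]
    have : eD D t ^ D = 1 := by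
      rw [← eD_nat_mul]; exact eD_dvd D ⟨t, by push_cast; ring⟩
    rw [this, sub_self, zero_div]

lemma eD_conj (D : ℕ) (t : ℤ) : (starRingEnd ℂ) (eD D t) = eD D (-t) := by
  rw [eD, eD, ← Complex.exp_conj]
  congr 1
  simp [map_div₀, Complex.conj_I, _root_.map_mul, _root_.map_ofNat, Complex.conj_ofReal]

variable {D : ℕ} [NeZero D]

lemma chr_eq (m n : ZMod D) : chr D m n = eD D (m.val * n.val) := by
  rw [chr, eD]; congr 1; push_cast; ring

lemma chr_mul_conj_s10 (x y n : ZMod D) :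
    chr D x n * (starRingEnd ℂ) (chr D y n) = eD D (((x.val : ℤ) - y.val) * n.val) := by
  rw [chr_eq, chr_eq, eD_conj, ← eD_add]; congr 1; ring

lemma val_cast (x : ZMod D) : ((x.val : ℤ) : ZMod D) = x := by
  simp [ZMod.natCast_val, ZMod.cast_id]

lemma chr_sum (x y : ZMod D) :
    ∑ n : ZMod D, chr D x n * (starRingEnd ℂ) (chr D y n) = if x = y then (D : ℂ) else 0 := by
  have h1 : ∀ n : ZMod D, chr D x n * (starRingEnd ℂ) (chr D y n)
      = eD D (n.val * ((x.val : ℤ) - y.val)) := fun n => by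
    rw [chr_mul_conj_s10]; congr 1; ring
  rw [Finset.sum_congr rfl fun n _ => h1 n, sum_eD]
  have : ((((x.val : ℤ) - y.val) : ℤ) : ZMod D) = 0 ↔ x = y := by
    push_cast [val_cast]
    rw [sub_eq_zero]
    simp [ZMod.natCast_val, ZMod.cast_id]
  by_cases h : x = y
  · rw [if_pos (this.mpr h), if_pos h]
  · rw [if_neg (fun hc => h (this.mp hc)), if_neg h]

lemma chr_zero (x : ZMod D) : chr D x 0 = 1 := by
  simp [chr, ZMod.val_zero]

lemma chr_pair_congr (x y u v n : ZMod D) (h : x - y = u - v) :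
    chr D x n * (starRingEnd ℂ) (chr D y n) = chr D u n * (starRingEnd ℂ) (chr D v n) := by
  rw [chr_mul_conj_s10, chr_mul_conj_s10]
  refine eD_congr D ?_
  push_cast [val_cast]
  simp only [ZMod.natCast_val, ZMod.cast_id]
  rw [h]

lemma phase_conj_apply (A : Matrix (ZMod D) (ZMod D) ℂ) (n a b : ZMod D) :
    (phaseV D n * A * (phaseV D n)ᴴ) a b
      = chr D a n * A a b * (starRingEnd ℂ) (chr D b n) := by
  simp [phaseV, Matrix.diagonal_conjTranspose, Matrix.diagonal_mul, Matrix.mul_diagonal]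

lemma shift_mul_apply (A : Matrix (ZMod D) (ZMod D) ℂ) (m i j : ZMod D) :
    (shiftU D m * A) i j = A (i - m) j := by
  rw [Matrix.mul_apply, Finset.sum_eq_single (i - m)]
  · simp [shiftU]
  · intro c _ hc
    have : ¬ i = c + m := fun h => hc (by rw [h]; ring)
    simp [shiftU, this]
  · simp

lemma mul_shiftH_apply (A : Matrix (ZMod D) (ZMod D) ℂ) (m i j : ZMod D) :
    (A * (shiftU D m)ᴴ) i j = A i (j - m) := by
  rw [Matrix.mul_apply, Finset.sum_eq_single (j - m)]
  · simp [shiftU, Matrix.conjTranspose_apply]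
  · intro c _ hc
    have : ¬ j = c + m := fun h => hc (by rw [h]; ring)
    simp [shiftU, Matrix.conjTranspose_apply, this]
  · simp

lemma shift_conj_apply (A : Matrix (ZMod D) (ZMod D) ℂ) (m a b : ZMod D) :
    (shiftU D m * A * (shiftU D m)ᴴ) a b = A (a - m) (b - m) := by
  rw [mul_shiftH_apply, shift_mul_apply]

lemma gcov_eq (σ : Matrix (ZMod D) (ZMod D) ℂ) (m n : ZMod D) :
    Gcov D σ m n
      = (D : ℂ)⁻¹ • (shiftU D m * (phaseV D n * σ * (phaseV D n)ᴴ) * (shiftU D m)ᴴ) := by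
  rw [Gcov, weylW]
  set c := Complex.exp (Real.pi * Complex.I * m.val * n.val / D) with hc
  have hcc : star c * c = 1 := by
    rw [hc, RCLike.star_def, ← Complex.exp_conj, ← Complex.exp_add]
    have : (starRingEnd ℂ) (↑Real.pi * Complex.I * m.val * n.val / D)
        = -(↑Real.pi * Complex.I * m.val * n.val / D) := by
      simp only [map_div₀, _root_.map_mul, Complex.conj_I, Complex.conj_ofReal,
        Complex.conj_natCast, map_natCast]
      ring
    rw [this, neg_add_cancel, Complex.exp_zero]
  rw [Matrix.conjTranspose_smul, Matrix.smul_mul, Matrix.smul_mul, Matrix.mul_smul,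
    smul_smul, smul_smul]
  have h2 : (D : ℂ)⁻¹ * c * star c = (D : ℂ)⁻¹ := by
    rw [mul_assoc, mul_comm c, hcc, mul_one]
  rw [h2, Matrix.conjTranspose_mul]
  congr 1
  simp only [Matrix.mul_assoc]

lemma quad_phi (σ : Matrix (ZMod D) (ZMod D) ℂ) (x : ZMod D) :
    star (ketphi D x) ⬝ᵥ σ.mulVec (ketphi D x) = σ x x := by
  simp [ketphi, dotProduct, Matrix.mulVec, Pi.star_apply, mul_ite, ite_mul,
    Finset.sum_ite_eq, apply_ite (starRingEnd ℂ)]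

lemma sum_outer_phi (c : ZMod D → ℂ) (a b : ZMod D) :
    (∑ k, c k • outer (ketphi D k) (ketphi D k)) a b = if a = b then c a else 0 := by
  rw [Matrix.sum_apply]
  rw [Finset.sum_eq_single a]
  · simp [outer, Matrix.vecMulVec_apply, ketphi, Pi.star_apply, eq_comm]
  · intro k _ hk
    simp [outer, Matrix.vecMulVec_apply, ketphi, Pi.star_apply, Ne.symm hk]
  · simp

lemma gcov_apply (σ : Matrix (ZMod D) (ZMod D) ℂ) (m n a b : ZMod D) :
    Gcov D σ m n a b
      = (D : ℂ)⁻¹ * (chr D (a - m) n * σ (a - m) (b - m)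
          * (starRingEnd ℂ) (chr D (b - m) n)) := by
  rw [gcov_eq, Matrix.smul_apply, shift_conj_apply, phase_conj_apply, smul_eq_mul]

lemma margin_Q (σ : Matrix (ZMod D) (ZMod D) ℂ) (m : ZMod D) :
    (∑ n : ZMod D, Gcov D σ m n) =
      ∑ k, (star (ketphi D (k - m)) ⬝ᵥ σ.mulVec (ketphi D (k - m))) •
        outer (ketphi D k) (ketphi D k) := by
  ext a b
  rw [Matrix.sum_apply]
  have h1 : ∑ n : ZMod D, Gcov D σ m n a b
      = (D : ℂ)⁻¹ * (σ (a - m) (b - m) * ∑ n : ZMod D,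
          chr D (a - m) n * (starRingEnd ℂ) (chr D (b - m) n)) := by
    rw [Finset.mul_sum, Finset.mul_sum]
    exact Finset.sum_congr rfl fun n _ => by rw [gcov_apply]; ring
  rw [h1, chr_sum]
  have h2 : (∑ k, (star (ketphi D (k - m)) ⬝ᵥ σ.mulVec (ketphi D (k - m))) •
      outer (ketphi D k) (ketphi D k)) a b = if a = b then σ (a - m) (a - m) else 0 := by
    rw [sum_outer_phi (fun k => star (ketphi D (k - m)) ⬝ᵥ σ.mulVec (ketphi D (k - m)))]
    by_cases h : a = b
    · rw [if_pos h, if_pos h, quad_phi]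
    · rw [if_neg h, if_neg h]
  rw [h2]
  have h3 : (a - m = b - m) ↔ a = b := sub_left_inj
  by_cases h : a = b
  · rw [if_pos (h3.mpr h), if_pos h, h]
    have hD : (D : ℂ) ≠ 0 := Nat.cast_ne_zero.mpr (NeZero.ne D)
    field_simp
  · rw [if_neg (fun hc => h (h3.mp hc)), if_neg h]
    simp

lemma sigmaQ_apply (σ : Matrix (ZMod D) (ZMod D) ℂ) (a b : ZMod D) :
    sigmaQ D σ a b = if a = b then σ a a else 0 := by
  rw [sigmaQ, sum_outer_phi (fun k => star (ketphi D k) ⬝ᵥ σ.mulVec (ketphi D k))]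
  by_cases h : a = b
  · rw [if_pos h, if_pos h, quad_phi]
  · rw [if_neg h, if_neg h]

lemma margin_Q2 (σ : Matrix (ZMod D) (ZMod D) ℂ) (m : ZMod D) :
    (∑ n : ZMod D, Gcov D σ m n) = shiftU D m * sigmaQ D σ * (shiftU D m)ᴴ := by
  rw [margin_Q]
  ext a b
  rw [shift_conj_apply, sigmaQ_apply]
  rw [sum_outer_phi (fun k => star (ketphi D (k - m)) ⬝ᵥ σ.mulVec (ketphi D (k - m)))]
  have h3 : (a - m = b - m) ↔ a = b := sub_left_inj
  by_cases h : a = b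
  · rw [if_pos h, if_pos (h3.mpr h), quad_phi]
  · rw [if_neg h, if_neg (fun hc => h (h3.mp hc))]

lemma sqrtD_mul_self : ((Real.sqrt D : ℝ) : ℂ) * ((Real.sqrt D : ℝ) : ℂ) = (D : ℂ) := by
  rw [← Complex.ofReal_mul, Real.mul_self_sqrt (Nat.cast_nonneg D)]
  norm_cast

lemma sqrtD_ne_zero : ((Real.sqrt D : ℝ) : ℂ) ≠ 0 := by
  have : (0 : ℝ) < Real.sqrt D := Real.sqrt_pos.mpr
    (by exact_mod_cast Nat.pos_of_ne_zero (NeZero.ne D))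
  exact_mod_cast this.ne'

lemma psi_pair (k a b : ZMod D) :
    ketpsi D k a * (starRingEnd ℂ) (ketpsi D k b)
      = (D : ℂ)⁻¹ * (chr D a k * (starRingEnd ℂ) (chr D b k)) := by
  have hD : (D : ℂ) ≠ 0 := Nat.cast_ne_zero.mpr (NeZero.ne D)
  have hs := sqrtD_ne_zero (D := D)
  simp only [ketpsi, map_div₀, Complex.conj_ofReal]
  rw [div_mul_div_comm, ← sqrtD_mul_self]
  field_simp

lemma quad_psi (σ : Matrix (ZMod D) (ZMod D) ℂ) (t : ZMod D) :
    star (ketpsi D t) ⬝ᵥ σ.mulVec (ketpsi D t)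
      = (D : ℂ)⁻¹ * ∑ u, ∑ v, (starRingEnd ℂ) (chr D u t) * σ u v * chr D v t := by
  have hD : (D : ℂ) ≠ 0 := Nat.cast_ne_zero.mpr (NeZero.ne D)
  simp only [dotProduct, Matrix.mulVec, ketpsi, Pi.star_apply, RCLike.star_def]
  rw [Finset.mul_sum]
  refine Finset.sum_congr rfl fun u _ => ?_
  rw [Finset.mul_sum, Finset.mul_sum]
  refine Finset.sum_congr rfl fun v _ => ?_
  have hs := sqrtD_ne_zero (D := D)
  have hm := sqrtD_mul_self (D := D)
  simp only [map_div₀, Complex.conj_ofReal]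
  rw [← hm]
  field_simp

lemma chr_four (u v a b n k : ZMod D) :
    (starRingEnd ℂ) (chr D u (k - n)) * chr D v (k - n)
        * (chr D a k * (starRingEnd ℂ) (chr D b k))
      = eD D (k.val * ((v.val : ℤ) - u.val + a.val - b.val))
          * eD D (((u.val : ℤ) - v.val) * n.val) := by
  rw [chr_eq, chr_eq, chr_eq, chr_eq, eD_conj, eD_conj, ← eD_add, ← eD_add, ← eD_add,
    ← eD_add]
  refine eD_congr D ?_
  push_cast [val_cast]
  simp only [ZMod.natCast_val, ZMod.cast_id]
  push_cast
  ring

lemma key (σ : Matrix (ZMod D) (ZMod D) ℂ) (n a b : ZMod D) :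
    ∑ k : ZMod D, (star (ketpsi D (k - n)) ⬝ᵥ σ.mulVec (ketpsi D (k - n)))
        * (ketpsi D k a * (starRingEnd ℂ) (ketpsi D k b))
      = (D : ℂ)⁻¹ * ∑ v, chr D (v + (a - b)) n * (starRingEnd ℂ) (chr D v n)
          * σ (v + (a - b)) v := by
  have hD : (D : ℂ) ≠ 0 := Nat.cast_ne_zero.mpr (NeZero.ne D)
  calc
    ∑ k : ZMod D, (star (ketpsi D (k - n)) ⬝ᵥ σ.mulVec (ketpsi D (k - n)))
        * (ketpsi D k a * (starRingEnd ℂ) (ketpsi D k b))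
      = ∑ k : ZMod D, ∑ u, ∑ v, (D : ℂ)⁻¹ * (D : ℂ)⁻¹
          * (σ u v * (eD D (k.val * ((v.val : ℤ) - u.val + a.val - b.val))
            * eD D (((u.val : ℤ) - v.val) * n.val))) := by
        refine Finset.sum_congr rfl fun k _ => ?_
        rw [quad_psi, psi_pair]
        simp only [Finset.mul_sum, Finset.sum_mul]
        refine Finset.sum_congr rfl fun u _ => Finset.sum_congr rfl fun v _ => ?_
        rw [← chr_four u v a b n k]
        ring
    _ = ∑ u, ∑ v, ∑ k : ZMod D, (D : ℂ)⁻¹ * (D : ℂ)⁻¹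
          * (σ u v * (eD D (k.val * ((v.val : ℤ) - u.val + a.val - b.val))
            * eD D (((u.val : ℤ) - v.val) * n.val))) := by
        rw [Finset.sum_comm]
        exact Finset.sum_congr rfl fun u _ => Finset.sum_comm
    _ = ∑ v, ∑ u, (D : ℂ)⁻¹ * (D : ℂ)⁻¹
          * (σ u v * ((if ((((v.val : ℤ) - u.val + a.val - b.val) : ℤ) : ZMod D) = 0
              then (D : ℂ) else 0)
            * eD D (((u.val : ℤ) - v.val) * n.val))) := by
        rw [Finset.sum_comm]
        refine Finset.sum_congr rfl fun v _ => Finset.sum_congr rfl fun u _ => ?_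
        simp only [← Finset.mul_sum]
        rw [← Finset.sum_mul, sum_eD]
    _ = ∑ v, (D : ℂ)⁻¹ * (chr D (v + (a - b)) n * (starRingEnd ℂ) (chr D v n)
          * σ (v + (a - b)) v) := by
        refine Finset.sum_congr rfl fun v _ => ?_
        have hcond : ∀ u : ZMod D,
            (((((v.val : ℤ) - u.val + a.val - b.val) : ℤ) : ZMod D) = 0) ↔ u = v + (a - b) := by
          intro u
          push_cast [val_cast]
          simp only [ZMod.natCast_val, ZMod.cast_id]
          constructor
          · intro h
            have h2 : v + (a - b) - u = 0 := by rw [← h]; ring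
            exact (sub_eq_zero.mp h2).symm
          · intro h; rw [h]; ring
        rw [Finset.sum_eq_single (v + (a - b))]
        · rw [if_pos ((hcond _).mpr rfl), chr_mul_conj_s10]
          field_simp
        · intro u _ hu
          rw [if_neg (fun hc => hu ((hcond u).mp hc))]
          ring
        · simp
    _ = (D : ℂ)⁻¹ * ∑ v, chr D (v + (a - b)) n * (starRingEnd ℂ) (chr D v n)
          * σ (v + (a - b)) v := by rw [Finset.mul_sum]

lemma sum_outer_psi (σ : Matrix (ZMod D) (ZMod D) ℂ) (n a b : ZMod D) :
    (∑ k, (star (ketpsi D (k - n)) ⬝ᵥ σ.mulVec (ketpsi D (k - n))) •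
        outer (ketpsi D k) (ketpsi D k)) a b
      = ∑ k : ZMod D, (star (ketpsi D (k - n)) ⬝ᵥ σ.mulVec (ketpsi D (k - n)))
          * (ketpsi D k a * (starRingEnd ℂ) (ketpsi D k b)) := by
  rw [Matrix.sum_apply]
  refine Finset.sum_congr rfl fun k _ => ?_
  simp only [Matrix.smul_apply, outer, Matrix.vecMulVec_apply, Pi.star_apply,
    RCLike.star_def, smul_eq_mul]

lemma sigmaP_apply (σ : Matrix (ZMod D) (ZMod D) ℂ) (a b : ZMod D) :
    sigmaP D σ a b = (D : ℂ)⁻¹ * ∑ v, σ (v + (a - b)) v := by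
  have h := key σ 0 a b
  simp only [sub_zero, chr_zero, _root_.map_one, one_mul, mul_one] at h
  rw [sigmaP, ← h, Matrix.sum_apply]
  refine Finset.sum_congr rfl fun t _ => ?_
  simp only [Matrix.smul_apply, outer, Matrix.vecMulVec_apply, Pi.star_apply,
    RCLike.star_def, smul_eq_mul]

lemma margin_P (σ : Matrix (ZMod D) (ZMod D) ℂ) (n : ZMod D) :
    (∑ m : ZMod D, Gcov D σ m n) =
      ∑ k, (star (ketpsi D (k - n)) ⬝ᵥ σ.mulVec (ketpsi D (k - n))) •
        outer (ketpsi D k) (ketpsi D k) := by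
  ext a b
  rw [Matrix.sum_apply, sum_outer_psi, key]
  have hL : ∑ m : ZMod D, Gcov D σ m n a b
      = ∑ v : ZMod D, (D : ℂ)⁻¹ * (chr D (v + (a - b)) n * σ (v + (a - b)) v
          * (starRingEnd ℂ) (chr D v n)) := by
    refine Fintype.sum_equiv (Equiv.subLeft b) _ _ fun m => ?_
    rw [gcov_apply]
    have h1 : b - m + (a - b) = a - m := by ring
    simp only [Equiv.subLeft_apply, h1]
  rw [hL, Finset.mul_sum]
  exact Finset.sum_congr rfl fun v _ => by ring

lemma margin_P2 (σ : Matrix (ZMod D) (ZMod D) ℂ) (n : ZMod D) :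
    (∑ m : ZMod D, Gcov D σ m n) = phaseV D n * sigmaP D σ * (phaseV D n)ᴴ := by
  rw [margin_P]
  ext a b
  rw [sum_outer_psi, key, phase_conj_apply, sigmaP_apply, Finset.mul_sum, Finset.mul_sum,
    Finset.mul_sum, Finset.sum_mul]
  refine Finset.sum_congr rfl fun v _ => ?_
  have h := chr_pair_congr (v + (a - b)) v a b n (by ring)
  linear_combination ((D : ℂ)⁻¹ * σ (v + (a - b)) v) * h

/-- the margins of the covariant phase-space POVM `G^σ` are the shifted
position-diagonal and momentum-diagonal parts of `σ`. -/
theorem statement10 (D : ℕ) [NeZero D] (σ : Matrix (ZMod D) (ZMod D) ℂ)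
    (hσ : σ.PosSemidef) (hσtr : σ.trace = 1) :
    (∀ m : ZMod D,
      (∑ n : ZMod D, Gcov D σ m n) =
        (∑ k : ZMod D, (star (ketphi D (k - m)) ⬝ᵥ σ.mulVec (ketphi D (k - m))) •
          outer (ketphi D k) (ketphi D k)) ∧
      (∑ n : ZMod D, Gcov D σ m n) = shiftU D m * sigmaQ D σ * (shiftU D m)ᴴ) ∧
    (∀ n : ZMod D,
      (∑ m : ZMod D, Gcov D σ m n) =
        (∑ k : ZMod D, (star (ketpsi D (k - n)) ⬝ᵥ σ.mulVec (ketpsi D (k - n))) •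
          outer (ketpsi D k) (ketpsi D k)) ∧
      (∑ m : ZMod D, Gcov D σ m n) = phaseV D n * sigmaP D σ * (phaseV D n)ᴴ) := by
  exact ⟨fun m => ⟨margin_Q σ m, margin_Q2 σ m⟩, fun n => ⟨margin_P σ n, margin_P2 σ n⟩⟩
end
end

section
/- Let 𝒳 and 𝒴 be finite groups, 𝒢 := 𝒳 × 𝒴, and D, D₁, D₂ ∈ ℕ positive. Let U: 𝒢 → U(D₁), V: 𝒢 → U(D₂), W: 𝒢 → U(D) be projective unitary representations. Let 𝒢 act on 𝒳 by (x',y')·x := x'x and on 𝒴 by (x',y')·y := y'y. Let (M_x)_{x∈𝒳} be a (U,𝒳)-covariant POVM on ℂ^{D₁}, (N_y)_{y∈𝒴} a (V,𝒴)-covariant POVM on ℂ^{D₂}, and (G_g)_{g∈𝒢} a (W,𝒢)-covariant POVM on ℂ^D (with 𝒢 acting on itself by left multiplication). Then G can be generated through broadcasting from M and N if and only if there exists a (W, U⊗V)-covariant channel Φ (Φ(W(g) ρ W(g)*) = (U(g)⊗V(g)) Φ(ρ) (U(g)⊗V(g))* for all g, ρ) such that tr[Φ(ρ)(M_{e₁}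 ⊗ N_{e₂})] = tr[ρ G_{(e₁,e₂)}] for all ρ, where e₁, e₂ are the neutral elements of 𝒳, 𝒴. -/
open Kronecker Matrix
open scoped ComplexOrder

noncomputable section
set_option linter.unusedSectionVars false

/-- A projective unitary representation of a group together with its multiplier. -/
def IsProjRep {G : Type} [Group G] {d : Type} [Fintype d] [DecidableEq d]
    (U : G → Matrix d d ℂ) (mult : G → G → ℂ) : Prop :=
  U 1 = 1 ∧ (∀ g, (U g)ᴴ * U g = 1 ∧ U g * (U g)ᴴ = 1) ∧
  (∀ g h, ‖mult g h‖ = 1) ∧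
  (∀ g, mult 1 g = 1) ∧ (∀ g, mult g 1 = 1) ∧
  (∀ g h k, mult g h * mult (g * h) k = mult g (h * k) * mult h k) ∧
  (∀ g h, U (g * h) = mult g h • (U g * U h))

section Aux
variable {m n d : Type} [Fintype m] [DecidableEq m] [Fintype n] [DecidableEq n]
  [Fintype d] [DecidableEq d]

lemma kron_conjT_s14 {a b c e : Type} (A : Matrix a b ℂ) (B : Matrix c e ℂ) :
    (A ⊗ₖ B)ᴴ = Aᴴ ⊗ₖ Bᴴ := by
  ext ⟨i, j⟩ ⟨k, l⟩
  simp [conjTranspose_apply, star_mul']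

/-- conjugation by a fixed matrix, as a linear map -/
def conjMap (B : Matrix n m ℂ) : Matrix m m ℂ →ₗ[ℂ] Matrix n n ℂ where
  toFun ρ := B * ρ * Bᴴ
  map_add' ρ σ := by simp [Matrix.mul_add, Matrix.add_mul]
  map_smul' c ρ := by simp [Matrix.mul_smul, Matrix.smul_mul]

@[simp] lemma conjMap_apply (B : Matrix n m ℂ) (ρ : Matrix m m ℂ) :
    conjMap B ρ = B * ρ * Bᴴ := rfl

lemma isCPMap_conjMap (B : Matrix n m ℂ) : IsCPMap (conjMap B) := by
  intro k A hA
  have key : (Matrix.of fun (p q : Fin k × n) =>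
      conjMap B (Matrix.of fun a b => A (p.1, a) (q.1, b)) p.2 q.2)
      = ((1 : Matrix (Fin k) (Fin k) ℂ) ⊗ₖ B) * A * ((1 : Matrix (Fin k) (Fin k) ℂ) ⊗ₖ B)ᴴ := by
    ext ⟨i, a⟩ ⟨j, b⟩
    simp only [of_apply, conjMap_apply, Matrix.mul_apply, conjTranspose_apply,
      kroneckerMap_apply, Fintype.sum_prod_type, Matrix.one_apply, apply_ite (star : ℂ → ℂ),
      star_one, star_zero, ite_mul, mul_ite, mul_zero, zero_mul, one_mul, mul_one,
      Finset.sum_ite_eq, Finset.sum_ite_eq', Finset.mem_univ, if_true]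
    rw [Finset.sum_comm]
    simp [Finset.sum_ite_eq, Finset.sum_ite_eq']
  rw [key]
  exact hA.mul_mul_conjTranspose_same _

lemma IsCPMap.comp {Φ : Matrix d d ℂ →ₗ[ℂ] Matrix n n ℂ} {Ψ : Matrix m m ℂ →ₗ[ℂ] Matrix d d ℂ}
    (hΦ : IsCPMap Φ) (hΨ : IsCPMap Ψ) : IsCPMap (Φ ∘ₗ Ψ) :=
  fun k A hA => hΦ k _ (hΨ k A hA)

lemma isCPMap_zero : IsCPMap (0 : Matrix m m ℂ →ₗ[ℂ] Matrix n n ℂ) := by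
  intro k A _
  have : (Matrix.of fun (p q : Fin k × n) =>
      (0 : Matrix m m ℂ →ₗ[ℂ] Matrix n n ℂ) (Matrix.of fun a b => A (p.1, a) (q.1, b)) p.2 q.2)
      = 0 := by ext p q; simp
  rw [this]; exact PosSemidef.zero

lemma IsCPMap.add {Φ Ψ : Matrix m m ℂ →ₗ[ℂ] Matrix n n ℂ}
    (hΦ : IsCPMap Φ) (hΨ : IsCPMap Ψ) : IsCPMap (Φ + Ψ) := by
  intro k A hA
  have : (Matrix.of fun (p q : Fin k × n) =>
      (Φ + Ψ) (Matrix.of fun a b => A (p.1, a) (q.1, b)) p.2 q.2)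
      = (Matrix.of fun (p q : Fin k × n) =>
        Φ (Matrix.of fun a b => A (p.1, a) (q.1, b)) p.2 q.2)
      + (Matrix.of fun (p q : Fin k × n) =>
        Ψ (Matrix.of fun a b => A (p.1, a) (q.1, b)) p.2 q.2) := by
    ext p q; simp
  rw [this]; exact (hΦ k A hA).add (hΨ k A hA)

lemma isCPMap_sum {ι : Type} (s : Finset ι) (Φ : ι → (Matrix m m ℂ →ₗ[ℂ] Matrix n n ℂ))
    (h : ∀ i ∈ s, IsCPMap (Φ i)) : IsCPMap (∑ i ∈ s, Φ i) := by
  classical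
  induction s using Finset.induction_on with
  | empty => simpa using isCPMap_zero
  | insert a s hi ih =>
    rw [Finset.sum_insert hi]
    exact (h _ (Finset.mem_insert_self _ _)).add
      (ih fun i his => h i (Finset.mem_insert_of_mem his))

lemma posSemidef_smul_nonneg {A : Matrix n n ℂ} (hA : A.PosSemidef) {c : ℂ} (hc : 0 ≤ c) :
    (c • A).PosSemidef := by
  obtain ⟨hre, him⟩ := Complex.nonneg_iff.mp hc
  constructor
  · have : star c = c := Complex.ext rfl (by simp [← him])
    unfold Matrix.IsHermitian
    rw [conjTranspose_smul, this, hA.1.eq]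
  · intro x
    exact ((hA.smul hc).2 x)

lemma IsCPMap.smul {Φ : Matrix m m ℂ →ₗ[ℂ] Matrix n n ℂ} (hΦ : IsCPMap Φ)
    {c : ℂ} (hc : 0 ≤ c) : IsCPMap (c • Φ) := by
  intro k A hA
  have : (Matrix.of fun (p q : Fin k × n) =>
      (c • Φ) (Matrix.of fun a b => A (p.1, a) (q.1, b)) p.2 q.2)
      = c • (Matrix.of fun (p q : Fin k × n) =>
        Φ (Matrix.of fun a b => A (p.1, a) (q.1, b)) p.2 q.2) := by
    ext p q; simp
  rw [this]; exact posSemidef_smul_nonneg (hΦ k A hA) hc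

lemma conj_phase_left {c : ℂ} (hc : ‖c‖ = 1) (Y : Matrix n m ℂ) (ρ : Matrix m m ℂ) :
    (c • Y) * ρ * (c • Y)ᴴ = Y * ρ * Yᴴ := by
  have h1 : c * star c = 1 := by
    rw [RCLike.star_def, Complex.mul_conj, Complex.normSq_eq_norm_sq, hc]; norm_num
  rw [conjTranspose_smul, Matrix.smul_mul, Matrix.smul_mul, Matrix.mul_smul, smul_smul,
    RCLike.star_def] at *
  rw [h1, one_smul]

lemma conj_phase_right {c : ℂ} (hc : ‖c‖ = 1) (Y : Matrix n m ℂ) (ρ : Matrix n n ℂ) :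
    (c • Y)ᴴ * ρ * (c • Y) = Yᴴ * ρ * Y := by
  have h1 : star c * c = 1 := by
    rw [mul_comm, RCLike.star_def, Complex.mul_conj, Complex.normSq_eq_norm_sq, hc]; norm_num
  rw [conjTranspose_smul, Matrix.smul_mul, Matrix.smul_mul, Matrix.mul_smul, smul_smul, h1,
    one_smul]


lemma conj_cancel {P : Matrix n n ℂ} (h1 : Pᴴ * P = 1) (A : Matrix n n ℂ) :
    Pᴴ * (P * A * Pᴴ) * P = A := by
  simp only [← Matrix.mul_assoc]
  rw [h1, Matrix.one_mul, Matrix.mul_assoc, h1, Matrix.mul_one]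

lemma conj_cancel' {P : Matrix n n ℂ} (h2 : P * Pᴴ = 1) (A : Matrix n n ℂ) :
    P * (Pᴴ * A * P) * Pᴴ = A := by
  simp only [← Matrix.mul_assoc]
  rw [h2, Matrix.one_mul, Matrix.mul_assoc, h2, Matrix.mul_one]

lemma trace_conj_mul (A B P : Matrix n n ℂ) :
    (A * (P * B * Pᴴ)).trace = ((Pᴴ * A * P) * B).trace := by
  rw [show A * (P * B * Pᴴ) = A * (P * B) * Pᴴ by simp only [Matrix.mul_assoc],
    Matrix.trace_mul_cycle,
    show Pᴴ * A * (P * B) = Pᴴ * A * P * B by simp only [Matrix.mul_assoc]]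

end Aux

/-- for `𝒢 = 𝒳 × 𝒴` acting on `𝒳` via the first factor and on `𝒴` via
the second, a `(W,𝒢)`-covariant POVM `G` can be generated through broadcasting from a
`(U,𝒳)`-covariant `M` and a `(V,𝒴)`-covariant `N` iff there is a `(W, U⊗V)`-covariant
channel `Φ` with `tr[Φ(ρ)(M_{e₁} ⊗ N_{e₂})] = tr[ρ G_e]` for all `ρ`. -/
theorem statement14 (𝒳 𝒴 : Type) [Group 𝒳] [Group 𝒴] [Fintype 𝒳] [Fintype 𝒴]
    (D D₁ D₂ : ℕ) (hD : 0 < D) (hD₁ : 0 < D₁) (hD₂ : 0 < D₂)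
    (U : 𝒳 × 𝒴 → Matrix (Fin D₁) (Fin D₁) ℂ) (mU : (𝒳 × 𝒴) → (𝒳 × 𝒴) → ℂ)
    (hU : IsProjRep U mU)
    (V : 𝒳 × 𝒴 → Matrix (Fin D₂) (Fin D₂) ℂ) (mV : (𝒳 × 𝒴) → (𝒳 × 𝒴) → ℂ)
    (hV : IsProjRep V mV)
    (W : 𝒳 × 𝒴 → Matrix (Fin D) (Fin D) ℂ) (mW : (𝒳 × 𝒴) → (𝒳 × 𝒴) → ℂ)
    (hW : IsProjRep W mW)
    (M : 𝒳 → Matrix (Fin D₁) (Fin D₁) ℂ) (hM : IsPOVM M)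
    (hMcov : ∀ (g : 𝒳 × 𝒴) (x : 𝒳), U g * M x * (U g)ᴴ = M (g.1 * x))
    (N : 𝒴 → Matrix (Fin D₂) (Fin D₂) ℂ) (hN : IsPOVM N)
    (hNcov : ∀ (g : 𝒳 × 𝒴) (y : 𝒴), V g * N y * (V g)ᴴ = N (g.2 * y))
    (G : 𝒳 × 𝒴 → Matrix (Fin D) (Fin D) ℂ) (hG : IsPOVM G)
    (hGcov : ∀ g h : 𝒳 × 𝒴, W g * G h * (W g)ᴴ = G (g * h)) :
    GenByBroadcast M N (fun x y => G (x, y)) ↔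
    ∃ Φ : Matrix (Fin D) (Fin D) ℂ →ₗ[ℂ] Matrix (Fin D₁ × Fin D₂) (Fin D₁ × Fin D₂) ℂ,
      IsChannel Φ ∧
      (∀ (g : 𝒳 × 𝒴) (ρ : Matrix (Fin D) (Fin D) ℂ),
        Φ (W g * ρ * (W g)ᴴ) = (U g ⊗ₖ V g) * Φ ρ * (U g ⊗ₖ V g)ᴴ) ∧
      ∀ ρ : Matrix (Fin D) (Fin D) ℂ,
        (Φ ρ * (M 1 ⊗ₖ N 1)).trace = (ρ * G 1).trace := by
  obtain ⟨hU1, hUu, hUm, hUm1, hUm1', hUcoc, hUmul⟩ := hU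
  obtain ⟨hV1, hVu, hVm, hVm1, hVm1', hVcoc, hVmul⟩ := hV
  obtain ⟨hW1, hWu, hWm, hWm1, hWm1', hWcoc, hWmul⟩ := hW
  -- abbreviation facts about K g := U g ⊗ₖ V g
  have hKu1 : ∀ g : 𝒳 × 𝒴, (U g ⊗ₖ V g)ᴴ * (U g ⊗ₖ V g) = 1 := fun g => by
    rw [kron_conjT_s14, ← mul_kronecker_mul, (hUu g).1, (hVu g).1, one_kronecker_one]
  have hKu2 : ∀ g : 𝒳 × 𝒴, (U g ⊗ₖ V g) * (U g ⊗ₖ V g)ᴴ = 1 := fun g => by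
    rw [kron_conjT_s14, ← mul_kronecker_mul, (hUu g).2, (hVu g).2, one_kronecker_one]
  have hKmul : ∀ g h : 𝒳 × 𝒴,
      (U (g*h) ⊗ₖ V (g*h)) = (mU g h * mV g h) • ((U g ⊗ₖ V g) * (U h ⊗ₖ V h)) := by
    intro g h
    rw [hUmul, hVmul, smul_kronecker, kronecker_smul, smul_smul, mul_kronecker_mul]
  have hKm : ∀ g h : 𝒳 × 𝒴, ‖mU g h * mV g h‖ = 1 := fun g h => by
    rw [norm_mul, hUm, hVm, one_mul]
  have hM1 : ∀ g : 𝒳 × 𝒴, U g * M 1 * (U g)ᴴ = M g.1 := fun g => by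
    simpa using hMcov g 1
  have hN1 : ∀ g : 𝒳 × 𝒴, V g * N 1 * (V g)ᴴ = N g.2 := fun g => by
    simpa using hNcov g 1
  have hG1 : ∀ g : 𝒳 × 𝒴, W g * G 1 * (W g)ᴴ = G g := fun g => by
    simpa using hGcov g 1
  have hMNg : ∀ g : 𝒳 × 𝒴,
      (U g ⊗ₖ V g) * (M 1 ⊗ₖ N 1) * (U g ⊗ₖ V g)ᴴ = M g.1 ⊗ₖ N g.2 := fun g => by
    rw [kron_conjT_s14, ← mul_kronecker_mul, ← mul_kronecker_mul, hM1 g, hN1 g]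
  have hWconj : ∀ (g h : 𝒳 × 𝒴) (ρ : Matrix (Fin D) (Fin D) ℂ),
      W g * (W h * ρ * (W h)ᴴ) * (W g)ᴴ = W (g*h) * ρ * (W (g*h))ᴴ := by
    intro g h ρ
    rw [hWmul g h, conj_phase_left (hWm g h)]
    simp only [conjTranspose_mul, Matrix.mul_assoc]
  constructor
  · -- forward: average the broadcasting channel over the group
    rintro ⟨Φ₀, ⟨hcp, htp⟩, hbr⟩
    set c : ℂ := (Fintype.card (𝒳 × 𝒴) : ℂ) with hc
    have hc0 : c ≠ 0 := Nat.cast_ne_zero.mpr Fintype.card_ne_zero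
    have hcpos : (0 : ℂ) ≤ c⁻¹ := by
      have h := Complex.zero_le_real.mpr
        (show (0:ℝ) ≤ ((Fintype.card (𝒳 × 𝒴) : ℝ))⁻¹ by positivity)
      rw [hc]; push_cast at h; exact h
    refine ⟨c⁻¹ • ∑ g : 𝒳 × 𝒴,
      (conjMap (U g ⊗ₖ V g)ᴴ ∘ₗ Φ₀ ∘ₗ conjMap (W g)), ⟨?_, ?_⟩, ?_, ?_⟩
    case _ =>
      exact IsCPMap.smul (isCPMap_sum _ _ fun g _ =>
        (isCPMap_conjMap _).comp (hcp.comp (isCPMap_conjMap _))) hcpos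
    all_goals
      have hΦapp : ∀ ρ : Matrix (Fin D) (Fin D) ℂ,
          (c⁻¹ • ∑ g : 𝒳 × 𝒴, (conjMap (U g ⊗ₖ V g)ᴴ ∘ₗ Φ₀ ∘ₗ conjMap (W g))) ρ
          = c⁻¹ • ∑ g : 𝒳 × 𝒴,
            (U g ⊗ₖ V g)ᴴ * Φ₀ (W g * ρ * (W g)ᴴ) * (U g ⊗ₖ V g) := by
        intro ρ
        simp [LinearMap.sum_apply, conjMap_apply]
    case _ =>
      -- trace preserving
      intro ρ
      rw [hΦapp, Matrix.trace_smul, Matrix.trace_sum]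
      have hterm : ∀ g : 𝒳 × 𝒴,
          ((U g ⊗ₖ V g)ᴴ * Φ₀ (W g * ρ * (W g)ᴴ) * (U g ⊗ₖ V g)).trace = ρ.trace := by
        intro g
        rw [Matrix.trace_mul_cycle, hKu2 g, Matrix.one_mul, htp,
          Matrix.trace_mul_cycle, (hWu g).1, Matrix.one_mul]
      simp only [hterm, Finset.sum_const, Finset.card_univ, nsmul_eq_mul, smul_eq_mul]
      rw [← hc, ← mul_assoc, inv_mul_cancel₀ hc0, one_mul]
    case _ =>
      -- covariance
      intro g ρ
      rw [hΦapp, hΦapp, Matrix.mul_smul, Matrix.smul_mul]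
      congr 1
      rw [Finset.mul_sum, Finset.sum_mul]
      refine Fintype.sum_equiv (Equiv.mulRight g) _ _ fun x => ?_
      simp only [Equiv.coe_mulRight]
      rw [hWconj x g ρ]
      -- now use the decomposition K x = phase • K (x*g) * (K g)ᴴ
      have h1 : (U (x*g) ⊗ₖ V (x*g)) * (U g ⊗ₖ V g)ᴴ
          = (mU x g * mV x g) • (U x ⊗ₖ V x) := by
        rw [hKmul x g, Matrix.smul_mul, Matrix.mul_assoc, hKu2 g, Matrix.mul_one]
      have h2 : (U x ⊗ₖ V x)
          = (mU x g * mV x g)⁻¹ • ((U (x*g) ⊗ₖ V (x*g)) * (U g ⊗ₖ V g)ᴴ) := by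
        rw [h1, smul_smul, inv_mul_cancel₀ (by
          intro h0; have := hKm x g; rw [h0] at this; simp at this), one_smul]
      rw [h2, conj_phase_right (by rw [norm_inv, hKm x g, inv_one]),
        conjTranspose_mul, conjTranspose_conjTranspose]
      simp only [Matrix.mul_assoc]
    case _ =>
      -- trace condition at identity
      intro ρ
      rw [hΦapp, Matrix.smul_mul, Matrix.trace_smul, Finset.sum_mul, Matrix.trace_sum]
      have hterm : ∀ g : 𝒳 × 𝒴,
          ((U g ⊗ₖ V g)ᴴ * Φ₀ (W g * ρ * (W g)ᴴ) * (U g ⊗ₖ V g) * (M 1 ⊗ₖ N 1)).trace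
          = (ρ * G 1).trace := by
        intro g
        rw [← trace_conj_mul, hMNg g, hbr (W g * ρ * (W g)ᴴ) g.1 g.2]
        show ((W g * ρ * (W g)ᴴ) * G g).trace = (ρ * G 1).trace
        rw [← hG1 g, trace_conj_mul, conj_cancel (hWu g).1]
      simp only [hterm, Finset.sum_const, Finset.card_univ, nsmul_eq_mul, smul_eq_mul]
      rw [← hc, ← mul_assoc, inv_mul_cancel₀ hc0, one_mul]
  · -- backward: covariant channel reproduces all effects
    rintro ⟨Φ, hch, hcov, htr⟩
    refine ⟨Φ, hch, fun ρ x y => ?_⟩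
    set g : 𝒳 × 𝒴 := (x, y) with hg
    have hMN : M x ⊗ₖ N y = (U g ⊗ₖ V g) * (M 1 ⊗ₖ N 1) * (U g ⊗ₖ V g)ᴴ := (hMNg g).symm
    have hΦρ : (U g ⊗ₖ V g)ᴴ * Φ ρ * (U g ⊗ₖ V g) = Φ ((W g)ᴴ * ρ * W g) := by
      have hc2 := hcov g ((W g)ᴴ * ρ * W g)
      rw [conj_cancel' (hWu g).2] at hc2
      rw [hc2, conj_cancel (hKu1 g)]
    rw [hMN, trace_conj_mul, hΦρ, htr]
    show ((W g)ᴴ * ρ * W g * G 1).trace = (ρ * G g).trace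
    rw [← hG1 g, trace_conj_mul]
end
end
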